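/- arXiv:1109.4335 — 9 statements merged into one kernel-verified Lean document; each statement's English description precedes it below -/
import Mathlib

section
/- The one-step revision map v ↦ v' has the following properties: (a) it is continuous as a map from [0,1]^P to itself; (b) it is monotone: if v ≤ w pointwise then v' ≤ w' pointwise; (c) it is inflationary: v ≤ v' pointwise; (d) the image set {v'(p) : p ∈ P} is contained in the image set {v(p) : p ∈ P}. -/
/-- The box of valuations: functions `P → ℝ` with values in `[0,1]`. -/
def unitBox (P : Type*) : Set (P → ℝ) := {v | ∀ p, v p ∈ Set.Icc (0:ℝ) 1}

/-- The one-step revision of a valuation `v` with respect to the doctrine `D`: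
`v'(p)` is the max over clauses `C ∈ D` with `p ∈ C` of the min over `q ∈ C \ {p}`
of `v(¬q)`. -/
noncomputable def step {P : Type*} (neg : P → P) (D : Finset (Finset P))
    (v : P → ℝ) : P → ℝ :=
  fun p => sSup {m : ℝ | ∃ C ∈ D, p ∈ C ∧
    m = sInf {b : ℝ | ∃ q ∈ C, q ≠ p ∧ b = v (neg q)}}

section Aux
set_option linter.unusedSectionVars false
set_option linter.unusedVariables false

variable {P : Type*} [Fintype P] [DecidableEq P]

/-- The inner set appearing in `step`. -/
def innerSet (neg : P → P) (v : P → ℝ) (p : P) (C : Finset P) : Set ℝ :=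
  {b : ℝ | ∃ q ∈ C, q ≠ p ∧ b = v (neg q)}

/-- The outer set appearing in `step`. -/
def outerSet (neg : P → P) (D : Finset (Finset P)) (v : P → ℝ) (p : P) : Set ℝ :=
  {m : ℝ | ∃ C ∈ D, p ∈ C ∧ m = sInf (innerSet neg v p C)}

lemma step_eq_outer (neg : P → P) (D : Finset (Finset P)) (v : P → ℝ) (p : P) :
    step neg D v p = sSup (outerSet neg D v p) := rfl

lemma innerSet_eq (neg : P → P) (v : P → ℝ) (p : P) (C : Finset P) :
    innerSet neg v p C = (fun q => v (neg q)) '' ↑(C.erase p) := by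
  ext b
  constructor
  · rintro ⟨q, hq, hqp, rfl⟩
    exact ⟨q, Finset.mem_coe.mpr (Finset.mem_erase.mpr ⟨hqp, hq⟩), rfl⟩
  · rintro ⟨q, hq, rfl⟩
    rcases Finset.mem_erase.mp (Finset.mem_coe.mp hq) with ⟨hqp, hqC⟩
    exact ⟨q, hqC, hqp, rfl⟩

lemma outerSet_eq (neg : P → P) (D : Finset (Finset P)) (v : P → ℝ) (p : P) :
    outerSet neg D v p
      = (fun C => sInf (innerSet neg v p C)) '' ↑(D.filter (fun C => p ∈ C)) := by
  ext m
  constructor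
  · rintro ⟨C, hC, hpC, rfl⟩
    exact ⟨C, Finset.mem_coe.mpr (Finset.mem_filter.mpr ⟨hC, hpC⟩), rfl⟩
  · rintro ⟨C, hC, rfl⟩
    rcases Finset.mem_filter.mp (Finset.mem_coe.mp hC) with ⟨hCD, hpC⟩
    exact ⟨C, hCD, hpC, rfl⟩

lemma erase_nonempty_of_two_le {C : Finset P} (h : 2 ≤ C.card) (p : P) :
    (C.erase p).Nonempty := by
  obtain ⟨q, hq, hqp⟩ := Finset.exists_mem_ne (s := C) (by omega) p
  exact ⟨q, Finset.mem_erase.mpr ⟨hqp, hq⟩⟩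

lemma innerSet_finite (neg : P → P) (v : P → ℝ) (p : P) (C : Finset P) :
    (innerSet neg v p C).Finite := by
  rw [innerSet_eq]; exact (C.erase p).finite_toSet.image _

lemma innerSet_nonempty (neg : P → P) (v : P → ℝ) (p : P) {C : Finset P}
    (h : 2 ≤ C.card) : (innerSet neg v p C).Nonempty := by
  rw [innerSet_eq]
  exact Set.Nonempty.image _ (Finset.coe_nonempty.mpr (erase_nonempty_of_two_le h p))

lemma outerSet_finite (neg : P → P) (D : Finset (Finset P)) (v : P → ℝ) (p : P) :
    (outerSet neg D v p).Finite := by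
  rw [outerSet_eq]; exact (Finset.finite_toSet _).image _

lemma outerSet_nonempty (neg : P → P) {D : Finset (Finset P)} (v : P → ℝ) (p : P)
    (hem : ({p, neg p} : Finset P) ∈ D) : (outerSet neg D v p).Nonempty :=
  ⟨_, {p, neg p}, hem, Finset.mem_insert_self _ _, rfl⟩

lemma innerSet_em (neg : P → P) (hinv : ∀ p, neg (neg p) = p) (hneg : ∀ p, neg p ≠ p)
    (v : P → ℝ) (p : P) :
    innerSet neg v p ({p, neg p} : Finset P) = {v p} := by
  ext b
  constructor
  · rintro ⟨q, hq, hqp, rfl⟩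
    rcases Finset.mem_insert.mp hq with rfl | hq
    · exact absurd rfl hqp
    · rw [Finset.mem_singleton] at hq
      subst hq
      rw [hinv]
      rfl
  · rintro rfl
    refine ⟨neg p, ?_, hneg p, by rw [hinv]⟩
    simp

/-- continuity of a `Finset.sup'` of continuous functions -/
lemma continuous_finset_sup' {X ι : Type*} [TopologicalSpace X] {s : Finset ι}
    (hs : s.Nonempty) {f : ι → X → ℝ} (hf : ∀ i ∈ s, Continuous (f i)) :
    Continuous (fun x => s.sup' hs fun i => f i x) := by
  induction hs using Finset.Nonempty.cons_induction with
  | singleton a =>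
    have h : (fun x => ({a} : Finset ι).sup' ⟨a, Finset.mem_singleton_self a⟩
        fun i => f i x) = f a := by
      funext x; exact Finset.sup'_singleton _
    rw [h]; exact hf a (Finset.mem_singleton_self a)
  | cons a s ha hne ihs =>
    rw [Finset.forall_mem_cons] at hf
    simp only [Finset.sup'_cons hne]
    exact hf.1.sup (ihs hf.2)

/-- continuity of a `Finset.inf'` of continuous functions -/
lemma continuous_finset_inf' {X ι : Type*} [TopologicalSpace X] {s : Finset ι}
    (hs : s.Nonempty) {f : ι → X → ℝ} (hf : ∀ i ∈ s, Continuous (f i)) :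
    Continuous (fun x => s.inf' hs fun i => f i x) := by
  induction hs using Finset.Nonempty.cons_induction with
  | singleton a =>
    have h : (fun x => ({a} : Finset ι).inf' ⟨a, Finset.mem_singleton_self a⟩
        fun i => f i x) = f a := by
      funext x; exact Finset.inf'_singleton _
    rw [h]; exact hf a (Finset.mem_singleton_self a)
  | cons a s ha hne ihs =>
    rw [Finset.forall_mem_cons] at hf
    simp only [Finset.inf'_cons hne]
    exact hf.1.inf (ihs hf.2)

lemma sInf_innerSet_eq (neg : P → P) (v : P → ℝ) (p : P) {C : Finset P}
    (h : (C.erase p).Nonempty) :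
    sInf (innerSet neg v p C) = (C.erase p).inf' h (fun q => v (neg q)) := by
  rw [innerSet_eq, Finset.inf'_eq_csInf_image]

lemma step_mem_range (neg : P → P) (hneg : ∀ p, neg p ≠ p)
    {D : Finset (Finset P)} (hcard : ∀ C ∈ D, 2 ≤ C.card)
    (hem : ∀ p : P, ({p, neg p} : Finset P) ∈ D)
    (v : P → ℝ) (p : P) : step neg D v p ∈ Set.range v := by
  rw [step_eq_outer]
  have h1 : sSup (outerSet neg D v p) ∈ outerSet neg D v p :=
    (outerSet_nonempty neg v p (hem p)).csSup_mem (outerSet_finite neg D v p)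
  obtain ⟨C, hC, hpC, hval⟩ := h1
  rw [hval]
  have h2 : sInf (innerSet neg v p C) ∈ innerSet neg v p C :=
    (innerSet_nonempty neg v p (hcard C hC)).csInf_mem (innerSet_finite neg v p C)
  obtain ⟨q, _, _, hb⟩ := h2
  exact ⟨neg q, hb.symm⟩

end Aux

theorem stmt0 {P : Type*} [Fintype P] [DecidableEq P]
    (neg : P → P) (hinv : ∀ p, neg (neg p) = p) (hneg : ∀ p, neg p ≠ p)
    (D : Finset (Finset P))
    (hcard : ∀ C ∈ D, 2 ≤ C.card)
    (hem : ∀ p : P, ({p, neg p} : Finset P) ∈ D) :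
    -- (a) continuity as a map from [0,1]^P to itself
    (ContinuousOn (step neg D) (unitBox P) ∧
      Set.MapsTo (step neg D) (unitBox P) (unitBox P)) ∧
    -- (b) monotonicity
    (∀ v w : P → ℝ, v ∈ unitBox P → w ∈ unitBox P → v ≤ w →
      step neg D v ≤ step neg D w) ∧
    -- (c) inflationarity
    (∀ v : P → ℝ, v ∈ unitBox P → v ≤ step neg D v) ∧
    -- (d) image set containment
    (∀ v : P → ℝ, v ∈ unitBox P →
      Set.range (step neg D v) ⊆ Set.range v) := by
  -- (d) first
  have hd : ∀ v : P → ℝ, Set.range (step neg D v) ⊆ Set.range v := by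
    intro v x hx
    obtain ⟨p, rfl⟩ := hx
    exact step_mem_range neg hneg hcard hem v p
  refine ⟨⟨?_, ?_⟩, ?_, ?_, fun v _ => hd v⟩
  · -- continuity
    have : Continuous (step neg D) := by
      rw [continuous_pi_iff]
      intro p
      have hS : (D.filter (fun C => p ∈ C)).Nonempty :=
        ⟨{p, neg p}, Finset.mem_filter.mpr ⟨hem p, Finset.mem_insert_self _ _⟩⟩
      have key : (fun v => step neg D v p)
          = fun v => (D.filter (fun C => p ∈ C)).sup' hS
              (fun C => sInf (innerSet neg v p C)) := by
        funext v
        rw [step_eq_outer, outerSet_eq, Finset.sup'_eq_csSup_image]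
      rw [key]
      apply continuous_finset_sup' hS
      intro C hC
      have hCD : C ∈ D := (Finset.mem_filter.mp hC).1
      have hE : (C.erase p).Nonempty := erase_nonempty_of_two_le (hcard C hCD) p
      have key2 : (fun v : P → ℝ => sInf (innerSet neg v p C))
          = fun v => (C.erase p).inf' hE (fun q => v (neg q)) := by
        funext v
        exact sInf_innerSet_eq neg v p hE
      rw [key2]
      exact continuous_finset_inf' hE (fun q _ => continuous_apply (neg q))
    exact this.continuousOn
  · -- maps to
    intro v hv p
    obtain ⟨q, hq⟩ := step_mem_range neg hneg hcard hem v p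
    rw [← hq]
    exact hv q
  · -- monotone
    intro v w _ _ hvw p
    rw [step_eq_outer, step_eq_outer]
    apply csSup_le (outerSet_nonempty neg v p (hem p))
    rintro m ⟨C, hC, hpC, rfl⟩
    have hle : sInf (innerSet neg v p C) ≤ sInf (innerSet neg w p C) := by
      apply le_csInf (innerSet_nonempty neg w p (hcard C hC))
      rintro b ⟨q, hq, hqp, rfl⟩
      calc sInf (innerSet neg v p C) ≤ v (neg q) :=
            csInf_le (innerSet_finite neg v p C).bddBelow ⟨q, hq, hqp, rfl⟩
        _ ≤ w (neg q) := hvw (neg q)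
    calc sInf (innerSet neg v p C) ≤ sInf (innerSet neg w p C) := hle
      _ ≤ sSup (outerSet neg D w p) :=
          le_csSup (outerSet_finite neg D w p).bddAbove ⟨C, hC, hpC, rfl⟩
  · -- inflationary
    intro v _ p
    rw [step_eq_outer]
    have hmem : v p ∈ outerSet neg D v p := by
      refine ⟨{p, neg p}, hem p, Finset.mem_insert_self _ _, ?_⟩
      rw [innerSet_em neg hinv hneg, csInf_singleton]
    exact le_csSup (outerSet_finite neg D v p).bddAbove hmem
end

section
/- The upper revised valuation v* is the least valuation lying above v that is invariant under one-step revision: namely, v ≤ v* pointwise, (v*)' = v*, and for every valuation w with v ≤ w pointwise and w' = w, one has v* ≤ w pointwise. -/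
section aux
variable {P : Type*} [DecidableEq P] (neg : P → P) (D : Finset (Finset P))

lemma Tset_eq (v : P → ℝ) (C : Finset P) (p : P) :
    {b : ℝ | ∃ q ∈ C, q ≠ p ∧ b = v (neg q)} =
      ↑((C.erase p).image fun q => v (neg q)) := by
  ext b
  simp only [Set.mem_setOf_eq, Finset.coe_image, Set.mem_image, Finset.mem_coe,
    Finset.mem_erase]
  constructor
  · rintro ⟨q, hq, hqp, rfl⟩; exact ⟨q, ⟨hqp, hq⟩, rfl⟩
  · rintro ⟨q, ⟨hqp, hq⟩, rfl⟩; exact ⟨q, hq, hqp, rfl⟩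

lemma Sset_eq (v : P → ℝ) (p : P) :
    {m : ℝ | ∃ C ∈ D, p ∈ C ∧
      m = sInf {b : ℝ | ∃ q ∈ C, q ≠ p ∧ b = v (neg q)}} =
      ↑((D.filter (fun C => p ∈ C)).image
        (fun C => sInf {b : ℝ | ∃ q ∈ C, q ≠ p ∧ b = v (neg q)})) := by
  ext m
  simp only [Set.mem_setOf_eq, Finset.coe_image, Set.mem_image, Finset.mem_coe,
    Finset.mem_filter]
  constructor
  · rintro ⟨C, hC, hp, rfl⟩; exact ⟨C, ⟨hC, hp⟩, rfl⟩
  · rintro ⟨C, ⟨hC, hp⟩, rfl⟩; exact ⟨C, hC, hp, rfl⟩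

lemma Tset_nonempty (v : P → ℝ) {C : Finset P} (hc : 2 ≤ C.card) {p : P}
    (hp : p ∈ C) :
    {b : ℝ | ∃ q ∈ C, q ≠ p ∧ b = v (neg q)}.Nonempty := by
  have : (C.erase p).Nonempty := by
    rw [← Finset.card_pos, Finset.card_erase_of_mem hp]; omega
  obtain ⟨q, hq⟩ := this
  rw [Finset.mem_erase] at hq
  exact ⟨v (neg q), q, hq.2, hq.1, rfl⟩

lemma step_mono (hcard : ∀ C ∈ D, 2 ≤ C.card)
    (hem : ∀ p : P, ({p, neg p} : Finset P) ∈ D)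
    {v w : P → ℝ} (h : v ≤ w) : step neg D v ≤ step neg D w := by
  intro p
  have hSne : {m : ℝ | ∃ C ∈ D, p ∈ C ∧
      m = sInf {b : ℝ | ∃ q ∈ C, q ≠ p ∧ b = v (neg q)}}.Nonempty :=
    ⟨_, {p, neg p}, hem p, Finset.mem_insert_self _ _, rfl⟩
  apply csSup_le hSne
  rintro m ⟨C, hC, hp, rfl⟩
  have hTv := Tset_nonempty neg v (hcard C hC) hp
  have hTw := Tset_nonempty neg w (hcard C hC) hp
  have hle : sInf {b : ℝ | ∃ q ∈ C, q ≠ p ∧ b = v (neg q)} ≤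
      sInf {b : ℝ | ∃ q ∈ C, q ≠ p ∧ b = w (neg q)} := by
    apply le_csInf hTw
    rintro b ⟨q, hq, hqp, rfl⟩
    calc sInf {b : ℝ | ∃ q ∈ C, q ≠ p ∧ b = v (neg q)} ≤ v (neg q) := by
          refine csInf_le ?_ ⟨q, hq, hqp, rfl⟩
          rw [Tset_eq]
          exact (Finset.finite_toSet _).bddBelow
      _ ≤ w (neg q) := h _
  refine hle.trans (le_csSup ?_ ⟨C, hC, hp, rfl⟩)
  rw [Sset_eq]
  exact (Finset.finite_toSet _).bddAbove

lemma le_step (hinv : ∀ p, neg (neg p) = p) (hneg : ∀ p, neg p ≠ p)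
    (hem : ∀ p : P, ({p, neg p} : Finset P) ∈ D)
    (v : P → ℝ) : v ≤ step neg D v := by
  intro p
  have hkey : sInf {b : ℝ | ∃ q ∈ ({p, neg p} : Finset P), q ≠ p ∧ b = v (neg q)}
      = v p := by
    have : {b : ℝ | ∃ q ∈ ({p, neg p} : Finset P), q ≠ p ∧ b = v (neg q)} = {v p} := by
      ext b
      simp only [Set.mem_setOf_eq, Finset.mem_insert, Finset.mem_singleton,
        Set.mem_singleton_iff]
      constructor
      · rintro ⟨q, (rfl | rfl), hqp, rfl⟩
        · exact absurd rfl hqp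
        · rw [hinv]
      · rintro rfl
        exact ⟨neg p, Or.inr rfl, hneg p, by rw [hinv]⟩
    rw [this, csInf_singleton]
  have hmem : v p ∈ {m : ℝ | ∃ C ∈ D, p ∈ C ∧
      m = sInf {b : ℝ | ∃ q ∈ C, q ≠ p ∧ b = v (neg q)}} :=
    ⟨{p, neg p}, hem p, Finset.mem_insert_self _ _, hkey.symm⟩
  exact le_csSup (by rw [Sset_eq]; exact (Finset.finite_toSet _).bddAbove) hmem

end aux

/-- The upper revised valuation `v*` (the eventual value of the nondecreasing
sequence of iterates of one-step revision starting from `v`) is the least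
valuation lying above `v` that is invariant under one-step revision. -/
theorem stmt2 {P : Type*} [Fintype P] [DecidableEq P]
    (neg : P → P) (hinv : ∀ p, neg (neg p) = p) (hneg : ∀ p, neg p ≠ p)
    (D : Finset (Finset P))
    (hcard : ∀ C ∈ D, 2 ≤ C.card)
    (hem : ∀ p : P, ({p, neg p} : Finset P) ∈ D)
    (v vstar : P → ℝ) (hv : v ∈ unitBox P)
    (hlim : ∃ N : ℕ, ∀ n ≥ N, (step neg D)^[n] v = vstar) :
    v ≤ vstar ∧ step neg D vstar = vstar ∧
      ∀ w : P → ℝ, w ∈ unitBox P → v ≤ w → step neg D w = w → vstar ≤ w := by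
  obtain ⟨N, hN⟩ := hlim
  have hstar : (step neg D)^[N] v = vstar := hN N le_rfl
  have hiter : ∀ n, v ≤ (step neg D)^[n] v := by
    intro n
    induction n with
    | zero => simp
    | succ n ih =>
      rw [Function.iterate_succ_apply']
      exact ih.trans (le_step neg D hinv hneg hem _)
  refine ⟨hstar ▸ hiter N, ?_, ?_⟩
  · have h := hN (N + 1) (Nat.le_succ N)
    rw [Function.iterate_succ_apply', hstar] at h
    exact h
  · intro w _ hvw hfix
    rw [← hstar]
    have : ∀ n, (step neg D)^[n] v ≤ w := by
      intro n
      induction n with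
      | zero => simpa using hvw
      | succ n ih =>
        rw [Function.iterate_succ_apply']
        calc step neg D ((step neg D)^[n] v) ≤ step neg D w :=
              step_mono neg D hcard hem ih
          _ = w := hfix
    exact this N
end

section
/- For every margin μ ∈ [0,1], the decision of margin μ associated with the upper revised valuation v* is definitely consistent with the doctrine: for every clause C ∈ D and every literal p ∈ C, if v*(¬q) − v*(q) > μ for every q ∈ C \ {p}, then v*(p) − v*(¬p) > μ. -/
/-- For every margin `μ ∈ [0,1]`, the decision of margin `μ` associated with the
upper revised valuation `v*` is definitely consistent with the doctrine. -/
theorem stmt3 {P : Type*} [Fintype P] [DecidableEq P]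
    (neg : P → P) (hinv : ∀ p, neg (neg p) = p) (hneg : ∀ p, neg p ≠ p)
    (D : Finset (Finset P))
    (hcard : ∀ C ∈ D, 2 ≤ C.card)
    (hem : ∀ p : P, ({p, neg p} : Finset P) ∈ D)
    (μ : ℝ) (hμ : μ ∈ Set.Icc (0:ℝ) 1)
    (v vstar : P → ℝ) (hv : v ∈ unitBox P)
    (hlim : ∃ N : ℕ, ∀ n ≥ N, (step neg D)^[n] v = vstar) :
    ∀ C ∈ D, ∀ p ∈ C,
      (∀ q ∈ C, q ≠ p → vstar (neg q) - vstar q > μ) →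
      vstar p - vstar (neg p) > μ := by
  obtain ⟨N, hN⟩ := hlim
  have hfix : step neg D vstar = vstar := by
    have h1 := hN N le_rfl
    have h2 := hN (N + 1) (Nat.le_succ N)
    rw [Function.iterate_succ_apply', h1] at h2
    exact h2
  have hTfin : ∀ (C : Finset P) (p : P),
      ({b : ℝ | ∃ q ∈ C, q ≠ p ∧ b = vstar (neg q)}).Finite := by
    intro C p
    apply Set.Finite.subset ((C : Set P).toFinite.image (fun q => vstar (neg q)))
    rintro b ⟨q, hq, _, rfl⟩
    exact ⟨q, hq, rfl⟩
  have hTne : ∀ C ∈ D, ∀ p : P,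
      ({b : ℝ | ∃ q ∈ C, q ≠ p ∧ b = vstar (neg q)}).Nonempty := by
    intro C hC p
    obtain ⟨q, hq, hqp⟩ := Finset.exists_mem_ne
      (lt_of_lt_of_le one_lt_two (hcard C hC)) p
    exact ⟨vstar (neg q), q, hq, hqp, rfl⟩
  have hkey : ∀ C ∈ D, ∀ p ∈ C,
      sInf {b : ℝ | ∃ q ∈ C, q ≠ p ∧ b = vstar (neg q)} ≤ vstar p := by
    intro C hC p hp
    conv_rhs => rw [← hfix]
    have hSfin : ({m : ℝ | ∃ C ∈ D, p ∈ C ∧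
        m = sInf {b : ℝ | ∃ q ∈ C, q ≠ p ∧ b = vstar (neg q)}}).Finite := by
      apply Set.Finite.subset ((D : Set (Finset P)).toFinite.image
        (fun C => sInf {b : ℝ | ∃ q ∈ C, q ≠ p ∧ b = vstar (neg q)}))
      rintro m ⟨C, hC, _, rfl⟩
      exact ⟨C, hC, rfl⟩
    exact le_csSup hSfin.bddAbove ⟨C, hC, hp, rfl⟩
  intro C hC p hp hhyp
  obtain ⟨q₀, hq₀C, hq₀p, hq₀⟩ := (hTne C hC p).csInf_mem (hTfin C p)
  have hp1 : vstar (neg q₀) ≤ vstar p := hq₀ ▸ hkey C hC p hp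
  obtain ⟨q₁, hq₁C, hq₁q₀, hq₁⟩ := (hTne C hC q₀).csInf_mem (hTfin C q₀)
  have hp2 : vstar (neg q₁) ≤ vstar q₀ := hq₁ ▸ hkey C hC q₀ hq₀C
  have hmain := hhyp q₀ hq₀C hq₀p
  by_cases hq₁p : q₁ = p
  · subst hq₁p
    linarith
  · have hle : sInf {b : ℝ | ∃ q ∈ C, q ≠ p ∧ b = vstar (neg q)} ≤ vstar (neg q₁) :=
      csInf_le (hTfin C p).bddBelow ⟨q₁, hq₁C, hq₁p, rfl⟩
    rw [hq₀] at hle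
    have hμ0 : (0:ℝ) ≤ μ := hμ.1
    linarith
end

section
/- The iterates of one-step revision satisfy, for every n ≥ 1 and every literal p ∈ P: v⁽ⁿ⁾(p) = max( v⁽⁰⁾(p), max over clauses C ∈ D with p ∈ C and C ≠ {p, ¬p} of (min over q ∈ C \ {p} of v⁽ⁿ⁻¹⁾(¬q)) ). -/
set_option linter.unusedSectionVars false
namespace Stmt4Aux

variable {P : Type*} [Fintype P] [DecidableEq P]

/-- The "rest" sup: over clauses other than the excluded-middle clause. -/
noncomputable def restSup (neg : P → P) (D : Finset (Finset P)) (w : P → ℝ) (p : P) : ℝ :=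
  sSup {m : ℝ | ∃ C ∈ D, p ∈ C ∧ C ≠ ({p, neg p} : Finset P) ∧
    m = sInf {b : ℝ | ∃ q ∈ C, q ≠ p ∧ b = w (neg q)}}

lemma bset_eq (neg : P → P) (w : P → ℝ) (C : Finset P) (p : P) :
    {b : ℝ | ∃ q ∈ C, q ≠ p ∧ b = w (neg q)} =
      (fun q => w (neg q)) '' ↑(C.erase p) := by
  ext b
  simp only [Set.mem_setOf_eq, Set.mem_image, Finset.coe_erase, Set.mem_diff,
    Finset.mem_coe, Set.mem_singleton_iff]
  constructor
  · rintro ⟨q, hq, hqp, rfl⟩; exact ⟨q, ⟨hq, hqp⟩, rfl⟩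
  · rintro ⟨q, ⟨hq, hqp⟩, rfl⟩; exact ⟨q, hq, hqp, rfl⟩

lemma erase_nonempty {C : Finset P} {p : P} (h2 : 2 ≤ C.card) (hp : p ∈ C) :
    (C.erase p).Nonempty := by
  rw [← Finset.card_pos, Finset.card_erase_of_mem hp]; omega

lemma sInf_bset (neg : P → P) (w : P → ℝ) {C : Finset P} {p : P}
    (h2 : 2 ≤ C.card) (hp : p ∈ C) :
    sInf {b : ℝ | ∃ q ∈ C, q ≠ p ∧ b = w (neg q)} =
      (C.erase p).inf' (erase_nonempty h2 hp) (fun q => w (neg q)) := by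
  rw [bset_eq]
  exact (Finset.inf'_eq_csInf_image _ _ _).symm

lemma aset_eq (neg : P → P) (D : Finset (Finset P)) (w : P → ℝ) (p : P) :
    {m : ℝ | ∃ C ∈ D, p ∈ C ∧
        m = sInf {b : ℝ | ∃ q ∈ C, q ≠ p ∧ b = w (neg q)}} =
      (fun C => sInf {b : ℝ | ∃ q ∈ C, q ≠ p ∧ b = w (neg q)}) ''
        ((D.filter (fun C => p ∈ C) : Finset (Finset P)) : Set (Finset P)) := by
  ext m
  simp only [Set.mem_setOf_eq, Set.mem_image, Finset.coe_filter, Set.mem_setOf_eq]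
  constructor
  · rintro ⟨C, hC, hp, rfl⟩; exact ⟨C, ⟨hC, hp⟩, rfl⟩
  · rintro ⟨C, ⟨hC, hp⟩, rfl⟩; exact ⟨C, hC, hp, rfl⟩

lemma aset'_eq (neg : P → P) (D : Finset (Finset P)) (w : P → ℝ) (p : P) :
    {m : ℝ | ∃ C ∈ D, p ∈ C ∧ C ≠ ({p, neg p} : Finset P) ∧
        m = sInf {b : ℝ | ∃ q ∈ C, q ≠ p ∧ b = w (neg q)}} =
      (fun C => sInf {b : ℝ | ∃ q ∈ C, q ≠ p ∧ b = w (neg q)}) ''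
        ((D.filter (fun C => p ∈ C ∧ C ≠ ({p, neg p} : Finset P)) : Finset (Finset P)) : Set (Finset P)) := by
  ext m
  simp only [Set.mem_setOf_eq, Set.mem_image, Finset.coe_filter, Set.mem_setOf_eq]
  constructor
  · rintro ⟨C, hC, hp, hne, rfl⟩; exact ⟨C, ⟨hC, hp, hne⟩, rfl⟩
  · rintro ⟨C, ⟨hC, hp, hne⟩, rfl⟩; exact ⟨C, hC, hp, hne, rfl⟩

lemma filter_insert (neg : P → P) (D : Finset (Finset P))
    (hem : ∀ p : P, ({p, neg p} : Finset P) ∈ D) (p : P) :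
    D.filter (fun C => p ∈ C) =
      insert ({p, neg p} : Finset P)
        (D.filter (fun C => p ∈ C ∧ C ≠ ({p, neg p} : Finset P))) := by
  ext C
  simp only [Finset.mem_filter, Finset.mem_insert]
  constructor
  · rintro ⟨hC, hp⟩
    by_cases h : C = ({p, neg p} : Finset P)
    · exact Or.inl h
    · exact Or.inr ⟨hC, hp, h⟩
  · rintro (rfl | ⟨hC, hp, _⟩)
    · exact ⟨hem p, Finset.mem_insert_self _ _⟩
    · exact ⟨hC, hp⟩

lemma em_card (neg : P → P) (hneg : ∀ p, neg p ≠ p) (p : P) :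
    2 ≤ ({p, neg p} : Finset P).card := by
  rw [Finset.card_insert_of_notMem (by simp [(hneg p).symm]), Finset.card_singleton]

lemma em_inf (neg : P → P) (hinv : ∀ p, neg (neg p) = p) (hneg : ∀ p, neg p ≠ p)
    (w : P → ℝ) (p : P) :
    sInf {b : ℝ | ∃ q ∈ ({p, neg p} : Finset P), q ≠ p ∧ b = w (neg q)} = w p := by
  rw [sInf_bset neg w (em_card neg hneg p) (Finset.mem_insert_self _ _)]
  have he : (({p, neg p} : Finset P)).erase p = {neg p} :=
    Finset.erase_insert (by simp [(hneg p).symm])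
  rw [Finset.inf'_congr (erase_nonempty (em_card neg hneg p) (Finset.mem_insert_self _ _)) he
    (fun q _ => rfl)]
  simp [hinv p]

lemma step_eq (neg : P → P) (hinv : ∀ p, neg (neg p) = p) (hneg : ∀ p, neg p ≠ p)
    (D : Finset (Finset P)) (hem : ∀ p : P, ({p, neg p} : Finset P) ∈ D)
    (w : P → ℝ) (hw : ∀ p, 0 ≤ w p) (p : P) :
    step neg D w p = max (w p) (restSup neg D w p) := by
  unfold step restSup
  rw [aset_eq, aset'_eq, filter_insert neg D hem p]
  set s := D.filter (fun C => p ∈ C ∧ C ≠ ({p, neg p} : Finset P)) with hs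
  set F : Finset P → ℝ :=
    fun C => sInf {b : ℝ | ∃ q ∈ C, q ≠ p ∧ b = w (neg q)} with hF
  have hFem : F ({p, neg p} : Finset P) = w p := em_inf neg hinv hneg w p
  rcases s.eq_empty_or_nonempty with he | hne
  · rw [he]
    simp only [Finset.coe_empty, Set.image_empty, Real.sSup_empty, Finset.insert_empty,
      Finset.coe_singleton, Set.image_singleton, csSup_singleton, hFem]
    exact (max_eq_left (hw p)).symm
  · have hins : (insert ({p, neg p} : Finset P) s).Nonempty := Finset.insert_nonempty _ _
    rw [← Finset.sup'_eq_csSup_image _ hne, ← Finset.sup'_eq_csSup_image _ hins,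
      Finset.sup'_insert hne, hFem]

lemma restSup_mono (neg : P → P) (D : Finset (Finset P))
    (hcard : ∀ C ∈ D, 2 ≤ C.card)
    {w w' : P → ℝ} (h : ∀ q, w q ≤ w' q) (p : P) :
    restSup neg D w p ≤ restSup neg D w' p := by
  unfold restSup
  rw [aset'_eq, aset'_eq]
  set s := D.filter (fun C => p ∈ C ∧ C ≠ ({p, neg p} : Finset P)) with hs
  rcases s.eq_empty_or_nonempty with he | hne
  · rw [he]; simp
  · rw [← Finset.sup'_eq_csSup_image _ hne, ← Finset.sup'_eq_csSup_image _ hne]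
    apply Finset.sup'_le
    intro C hC
    have hCD : C ∈ D := (Finset.mem_filter.mp hC).1
    have hp : p ∈ C := (Finset.mem_filter.mp hC).2.1
    have h2 := hcard C hCD
    calc sInf {b : ℝ | ∃ q ∈ C, q ≠ p ∧ b = w (neg q)}
        ≤ sInf {b : ℝ | ∃ q ∈ C, q ≠ p ∧ b = w' (neg q)} := by
          rw [sInf_bset neg w h2 hp, sInf_bset neg w' h2 hp]
          refine Finset.le_inf' _ _ fun q hq => ?_
          exact le_trans (Finset.inf'_le _ hq) (h (neg q))
      _ ≤ _ := Finset.le_sup'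
          (fun C => sInf {b : ℝ | ∃ q ∈ C, q ≠ p ∧ b = w' (neg q)}) hC

end Stmt4Aux

/-- For `n ≥ 1`, `v⁽ⁿ⁾(p)` equals the max of `v⁽⁰⁾(p)` and the max over clauses
`C ∈ D` with `p ∈ C` and `C ≠ {p, ¬p}` of the min over `q ∈ C \ {p}` of
`v⁽ⁿ⁻¹⁾(¬q)` (the max over an empty collection being 0). -/
theorem stmt4 {P : Type*} [Fintype P] [DecidableEq P]
    (neg : P → P) (hinv : ∀ p, neg (neg p) = p) (hneg : ∀ p, neg p ≠ p)
    (D : Finset (Finset P))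
    (hcard : ∀ C ∈ D, 2 ≤ C.card)
    (hem : ∀ p : P, ({p, neg p} : Finset P) ∈ D)
    (v : P → ℝ) (hv : v ∈ unitBox P)
    (n : ℕ) (hn : 1 ≤ n) (p : P) :
    (step neg D)^[n] v p =
      max (v p)
        (sSup {m : ℝ | ∃ C ∈ D, p ∈ C ∧ C ≠ ({p, neg p} : Finset P) ∧
          m = sInf {b : ℝ | ∃ q ∈ C, q ≠ p ∧
            b = (step neg D)^[n - 1] v (neg q)}}) := by
  have hv0 : ∀ q, 0 ≤ v q := fun q => (hv q).1
  have hiter0 : ∀ m q, 0 ≤ (step neg D)^[m] v q := by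
    intro m
    induction m with
    | zero => exact hv0
    | succ k ih =>
      intro q
      rw [Function.iterate_succ_apply', Stmt4Aux.step_eq neg hinv hneg D hem _ ih q]
      exact le_trans (ih q) (le_max_left _ _)
  have hiterm : ∀ m q, (step neg D)^[m] v q ≤ (step neg D)^[m+1] v q := by
    intro m q
    rw [Function.iterate_succ_apply', Stmt4Aux.step_eq neg hinv hneg D hem _ (hiter0 m) q]
    exact le_max_left _ _
  obtain ⟨m, rfl⟩ : ∃ m, n = m + 1 := ⟨n - 1, (Nat.succ_pred_eq_of_pos hn).symm⟩
  clear hn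
  simp only [Nat.add_sub_cancel]
  show (step neg D)^[m+1] v p = max (v p) (Stmt4Aux.restSup neg D ((step neg D)^[m] v) p)
  induction m generalizing p with
  | zero =>
    rw [Function.iterate_one]
    exact Stmt4Aux.step_eq neg hinv hneg D hem v hv0 p
  | succ k ih =>
    rw [Function.iterate_succ_apply',
      Stmt4Aux.step_eq neg hinv hneg D hem _ (hiter0 (k+1)) p, ih p]
    rw [max_assoc]
    congr 1
    exact max_eq_right (Stmt4Aux.restSup_mono neg D hcard (hiterm k) p)
end

section
/- Let the initial valuation satisfy v(s_x) = v(¬s_x) = 0 for all x ∈ I, with arbitrary values v(p_{xy}) ∈ [0,1]. Set c_x = max over y ≠ x of v(p_{yx}). Then the upper revised valuation v* (the eventual value of the iterates of T) satisfies: v*(¬s_x) = c_x for every x; v*(s_x) = min over z ≠ x of c_z for every x; and v*(p_{xy}) = max( v(p_{xy}), min over z ≠ x of c_z ) for all distinct x, y. -/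
/-- A valuation for the supremacy doctrine: degrees of belief for the literals
`s_x` ("x is supreme"), `¬s_x`, and `p_{xy}` ("x is preferable to y", for
distinct `x, y`), under the identification `¬p_{xy} = p_{yx}`. -/
structure SVal (I : Type*) where
  s : I → ℝ
  ns : I → ℝ
  p : I → I → ℝ

/-- Max over a (possibly empty) index set of reals: the empty max is `0`
(note `Real.sSup_empty = 0`). -/
noncomputable def sup0 (S : Set ℝ) : ℝ := sSup S

open Classical in
/-- Min over a (possibly empty) index set of reals: the empty min is `1`. -/
noncomputable def inf1 (S : Set ℝ) : ℝ := if S.Nonempty then sInf S else 1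

/-- The one-step revision operator associated with the supremacy doctrine. -/
noncomputable def Tsup {I : Type*} (v : SVal I) : SVal I where
  s := fun x => max (v.s x)
    (max (inf1 {b : ℝ | ∃ y, y ≠ x ∧ b = v.ns y})
         (inf1 {b : ℝ | ∃ y, y ≠ x ∧ b = v.p x y}))
  ns := fun x => max (v.ns x) (sup0 {b : ℝ | ∃ y, y ≠ x ∧ b = v.p y x})
  p := fun x y => max (v.p x y)
    (max (v.s x)
         (min (v.ns y) (inf1 {b : ℝ | ∃ z, z ≠ x ∧ z ≠ y ∧ b = v.p y z})))

section Helpers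

variable {I : Type*}

lemma SupPf.finite_sub_range [Finite I] {S : Set ℝ} (f : I → ℝ)
    (h : ∀ b ∈ S, ∃ y, b = f y) : S.Finite :=
  (Set.finite_range f).subset fun b hb => by
    obtain ⟨y, hy⟩ := h b hb; exact ⟨y, hy.symm⟩

lemma SupPf.le_sup0 {S : Set ℝ} (hfin : S.Finite) {b : ℝ} (hb : b ∈ S) : b ≤ sup0 S :=
  le_csSup hfin.bddAbove hb

lemma SupPf.sup0_le {S : Set ℝ} {a : ℝ} (h : ∀ b ∈ S, b ≤ a) (ha : 0 ≤ a) : sup0 S ≤ a :=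
  Real.sSup_le h ha

lemma SupPf.inf1_le {S : Set ℝ} (hfin : S.Finite) {b : ℝ} (hb : b ∈ S) : inf1 S ≤ b := by
  rw [inf1, if_pos ⟨b, hb⟩]
  exact csInf_le hfin.bddBelow hb

lemma SupPf.le_inf1 {S : Set ℝ} {a : ℝ} (h : ∀ b ∈ S, a ≤ b) (ha : a ≤ 1) : a ≤ inf1 S := by
  rw [inf1]
  split_ifs with hne
  · exact le_csInf hne h
  · exact ha

lemma SupPf.sup0_mono' [Finite I] {P : I → Prop} {f g : I → ℝ}
    (h : ∀ y, P y → f y ≤ g y) :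
    sup0 {b : ℝ | ∃ y, P y ∧ b = f y} ≤ sup0 {b : ℝ | ∃ y, P y ∧ b = g y} := by
  by_cases hP : ∃ y, P y
  · obtain ⟨y0, hy0⟩ := hP
    refine csSup_le ⟨f y0, y0, hy0, rfl⟩ ?_
    rintro b ⟨y, hy, rfl⟩
    refine (h y hy).trans (SupPf.le_sup0 ?_ ⟨y, hy, rfl⟩)
    exact SupPf.finite_sub_range g (by rintro b ⟨z, _, rfl⟩; exact ⟨z, rfl⟩)
  · have e1 : {b : ℝ | ∃ y, P y ∧ b = f y} = ∅ :=
      Set.eq_empty_iff_forall_notMem.mpr fun b ⟨y, hy, _⟩ => hP ⟨y, hy⟩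
    have e2 : {b : ℝ | ∃ y, P y ∧ b = g y} = ∅ :=
      Set.eq_empty_iff_forall_notMem.mpr fun b ⟨y, hy, _⟩ => hP ⟨y, hy⟩
    rw [e1, e2]

lemma SupPf.inf1_mono' [Finite I] {P : I → Prop} {f g : I → ℝ}
    (h : ∀ y, P y → f y ≤ g y) :
    inf1 {b : ℝ | ∃ y, P y ∧ b = f y} ≤ inf1 {b : ℝ | ∃ y, P y ∧ b = g y} := by
  by_cases hP : ∃ y, P y
  · obtain ⟨y0, hy0⟩ := hP
    rw [inf1, if_pos ⟨f y0, y0, hy0, rfl⟩, inf1, if_pos ⟨g y0, y0, hy0, rfl⟩]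
    refine le_csInf ⟨g y0, y0, hy0, rfl⟩ ?_
    rintro b ⟨y, hy, rfl⟩
    have hfin : {b : ℝ | ∃ y, P y ∧ b = f y}.Finite :=
      SupPf.finite_sub_range f (by rintro b ⟨z, _, rfl⟩; exact ⟨z, rfl⟩)
    exact (csInf_le hfin.bddBelow ⟨y, hy, rfl⟩).trans (h y hy)
  · have e1 : {b : ℝ | ∃ y, P y ∧ b = f y} = ∅ :=
      Set.eq_empty_iff_forall_notMem.mpr fun b ⟨y, hy, _⟩ => hP ⟨y, hy⟩
    have e2 : {b : ℝ | ∃ y, P y ∧ b = g y} = ∅ :=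
      Set.eq_empty_iff_forall_notMem.mpr fun b ⟨y, hy, _⟩ => hP ⟨y, hy⟩
    rw [e1, e2]

/-- Componentwise order on valuations. -/
def SupPf.SLE (u u' : SVal I) : Prop :=
  (∀ x, u.s x ≤ u'.s x) ∧ (∀ x, u.ns x ≤ u'.ns x) ∧ (∀ x y, u.p x y ≤ u'.p x y)

lemma SupPf.SLE_trans {u u' u'' : SVal I} (h : SupPf.SLE u u') (h' : SupPf.SLE u' u'') :
    SupPf.SLE u u'' :=
  ⟨fun x => (h.1 x).trans (h'.1 x), fun x => (h.2.1 x).trans (h'.2.1 x),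
   fun x y => (h.2.2 x y).trans (h'.2.2 x y)⟩

lemma SupPf.le_Tsup (u : SVal I) : SupPf.SLE u (Tsup u) :=
  ⟨fun _ => le_max_left _ _, fun _ => le_max_left _ _, fun _ _ => le_max_left _ _⟩

lemma SupPf.Tsup_mono [Finite I] {u u' : SVal I} (h : SupPf.SLE u u') :
    SupPf.SLE (Tsup u) (Tsup u') := by
  obtain ⟨hs, hns, hp⟩ := h
  refine ⟨fun x => ?_, fun x => ?_, fun x y => ?_⟩
  · exact max_le_max (hs x)
      (max_le_max (SupPf.inf1_mono' (P := fun y => y ≠ x) fun y _ => hns y)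
                  (SupPf.inf1_mono' (P := fun y => y ≠ x) fun y _ => hp x y))
  · exact max_le_max (hns x) (SupPf.sup0_mono' (P := fun y => y ≠ x) fun y _ => hp y x)
  · have e : ∀ (f : I → ℝ), {b : ℝ | ∃ z, z ≠ x ∧ z ≠ y ∧ b = f z}
        = {b : ℝ | ∃ z, (z ≠ x ∧ z ≠ y) ∧ b = f z} := by
      intro f; ext b; simp [and_assoc]
    show max (u.p x y) (max (u.s x) (min (u.ns y)
        (inf1 {b : ℝ | ∃ z, z ≠ x ∧ z ≠ y ∧ b = u.p y z})))
      ≤ max (u'.p x y) (max (u'.s x) (min (u'.ns y)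
        (inf1 {b : ℝ | ∃ z, z ≠ x ∧ z ≠ y ∧ b = u'.p y z})))
    rw [e (fun z => u.p y z), e (fun z => u'.p y z)]
    exact max_le_max (hp x y) (max_le_max (hs x) (min_le_min (hns y)
      (SupPf.inf1_mono' (P := fun z => z ≠ x ∧ z ≠ y) fun z _ => hp y z)))

end Helpers

/-- Minimax rule: with zero initial belief in the `s_x` and `¬s_x`, the upper
revised valuation of the supremacy doctrine is given in terms of
`c_x = max_{y ≠ x} v(p_{yx})`. -/
theorem stmt6 {I : Type*} [Fintype I] [DecidableEq I]
    (hcard : 2 ≤ Fintype.card I)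
    (v : SVal I)
    (hbox : ∀ x y : I, x ≠ y → v.p x y ∈ Set.Icc (0:ℝ) 1)
    (hs : ∀ x, v.s x = 0) (hns : ∀ x, v.ns x = 0)
    (c : I → ℝ) (hc : ∀ x, c x = sup0 {b : ℝ | ∃ y, y ≠ x ∧ b = v.p y x})
    (vstar : SVal I) (hstar : ∃ N : ℕ, ∀ n ≥ N, Tsup^[n] v = vstar) :
    (∀ x, vstar.ns x = c x) ∧
    (∀ x, vstar.s x = inf1 {b : ℝ | ∃ z, z ≠ x ∧ b = c z}) ∧
    (∀ x y : I, x ≠ y →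
      vstar.p x y = max (v.p x y) (inf1 {b : ℝ | ∃ z, z ≠ x ∧ b = c z})) := by
  classical
  have hcne : ∀ x : I, ∃ y : I, y ≠ x :=
    Fintype.exists_ne_of_one_lt_card (by omega)
  set M : I → ℝ := fun x => inf1 {b : ℝ | ∃ z, z ≠ x ∧ b = c z} with hM
  have hfinp : ∀ x : I, {b : ℝ | ∃ y, y ≠ x ∧ b = v.p y x}.Finite := fun x =>
    SupPf.finite_sub_range (fun y => v.p y x) (by rintro b ⟨y, _, rfl⟩; exact ⟨y, rfl⟩)
  have hfinc : ∀ x : I, {b : ℝ | ∃ z, z ≠ x ∧ b = c z}.Finite := fun x =>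
    SupPf.finite_sub_range c (by rintro b ⟨y, _, rfl⟩; exact ⟨y, rfl⟩)
  have hpc : ∀ x y : I, x ≠ y → v.p x y ≤ c y := fun x y hxy => by
    rw [hc y]; exact SupPf.le_sup0 (hfinp y) ⟨x, hxy, rfl⟩
  have hc0 : ∀ x, 0 ≤ c x := fun x => by
    obtain ⟨y, hy⟩ := hcne x
    exact le_trans (hbox y x hy).1 (hpc y x hy)
  have hMc : ∀ x y : I, y ≠ x → M x ≤ c y := fun x y h =>
    SupPf.inf1_le (hfinc x) ⟨y, h, rfl⟩
  have hM0 : ∀ x, 0 ≤ M x := fun x =>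
    SupPf.le_inf1 (by rintro b ⟨z, _, rfl⟩; exact hc0 z) zero_le_one
  -- the candidate fixed point
  set w : SVal I := ⟨M, c, fun x y => max (v.p x y) (M x)⟩ with hw
  have hwp : ∀ x y : I, w.p x y = max (v.p x y) (M x) := fun _ _ => rfl
  have hwpc : ∀ x y : I, x ≠ y → w.p x y ≤ c y := fun x y h =>
    max_le (hpc x y h) (hMc x y (Ne.symm h))
  -- w is a pre-fixed point: Tsup w ≤ w
  have hTw : SupPf.SLE (Tsup w) w := by
    refine ⟨fun x => ?_, fun x => ?_, fun x y => ?_⟩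
    · show max (w.s x) (max (inf1 {b : ℝ | ∃ y, y ≠ x ∧ b = w.ns y})
          (inf1 {b : ℝ | ∃ y, y ≠ x ∧ b = w.p x y})) ≤ M x
      refine max_le le_rfl (max_le le_rfl ?_)
      exact SupPf.inf1_mono' (P := fun y => y ≠ x)
        (f := fun y => w.p x y) (g := c) fun y hy => hwpc x y (Ne.symm hy)
    · show max (w.ns x) (sup0 {b : ℝ | ∃ y, y ≠ x ∧ b = w.p y x}) ≤ c x
      refine max_le le_rfl (SupPf.sup0_le ?_ (hc0 x))
      rintro b ⟨y, hy, rfl⟩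
      exact hwpc y x hy
    · show max (w.p x y) (max (w.s x) (min (w.ns y)
          (inf1 {b : ℝ | ∃ z, z ≠ x ∧ z ≠ y ∧ b = w.p y z}))) ≤ w.p x y
      refine max_le le_rfl (max_le (le_max_right _ _) ?_)
      have hQfin : {b : ℝ | ∃ z, z ≠ x ∧ z ≠ y ∧ b = w.p y z}.Finite :=
        SupPf.finite_sub_range (fun z => w.p y z)
          (by rintro b ⟨z, _, _, rfl⟩; exact ⟨z, rfl⟩)
      by_cases hxy : x = y
      · subst hxy
        -- min (c x) Q ≤ max (v.p x x) (M x); show Q ≤ M x suffices via min_le_right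
        refine le_trans (min_le_right _ _) (le_trans ?_ (le_max_right _ _))
        -- Q ≤ M x since each w.p x z ≤ c z
        have hset : {b : ℝ | ∃ z, z ≠ x ∧ z ≠ x ∧ b = w.p x z}
            = {b : ℝ | ∃ z, z ≠ x ∧ b = w.p x z} := by
          ext b; constructor
          · rintro ⟨z, hz, _, rfl⟩; exact ⟨z, hz, rfl⟩
          · rintro ⟨z, hz, rfl⟩; exact ⟨z, hz, hz, rfl⟩
        rw [hset]
        exact SupPf.inf1_mono' (P := fun z => z ≠ x)
          (f := fun z => w.p x z) (g := c) fun z hz => hwpc x z (Ne.symm hz)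
      · -- x ≠ y : min (c y) Q ≤ M x
        have hne : ({b : ℝ | ∃ z, z ≠ x ∧ b = c z}).Nonempty := by
          obtain ⟨z0, hz0⟩ := hcne x
          exact ⟨c z0, z0, hz0, rfl⟩
        have hMmem : M x ∈ {b : ℝ | ∃ z, z ≠ x ∧ b = c z} := by
          have hMeq : M x = sInf {b : ℝ | ∃ z, z ≠ x ∧ b = c z} := by
            show inf1 _ = _
            rw [inf1, if_pos hne]
          rw [hMeq]
          exact hne.csInf_mem (hfinc x)
        obtain ⟨z0, hz0x, hz0⟩ := hMmem
        by_cases hz0y : z0 = y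
        · refine le_trans (min_le_left _ _) ?_
          show c y ≤ max (v.p x y) (M x)
          rw [hz0, hz0y]
          exact le_max_right _ _
        · refine le_trans (min_le_right _ _) (le_trans ?_ (le_max_right _ _))
          calc inf1 {b : ℝ | ∃ z, z ≠ x ∧ z ≠ y ∧ b = w.p y z}
              ≤ w.p y z0 := SupPf.inf1_le hQfin ⟨z0, hz0x, hz0y, rfl⟩
            _ ≤ c z0 := hwpc y z0 (fun h => hz0y h.symm)
            _ = M x := hz0.symm
  -- v ≤ w
  have hvw : SupPf.SLE v w :=
    ⟨fun x => by rw [hs x]; exact hM0 x,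
     fun x => by rw [hns x]; exact hc0 x,
     fun x y => le_max_left _ _⟩
  -- iterates stay below w
  have hup : ∀ n, SupPf.SLE (Tsup^[n] v) w := by
    intro n
    induction n with
    | zero => exact hvw
    | succ n ih =>
        rw [Function.iterate_succ_apply']
        exact SupPf.SLE_trans (SupPf.Tsup_mono ih) hTw
  -- iterates stay above v
  have hlowiter : ∀ n, SupPf.SLE v (Tsup^[n] v) := by
    intro n
    induction n with
    | zero => exact ⟨fun _ => le_rfl, fun _ => le_rfl, fun _ _ => le_rfl⟩
    | succ n ih =>
        rw [Function.iterate_succ_apply']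
        exact SupPf.SLE_trans ih (SupPf.le_Tsup _)
  obtain ⟨N, hN⟩ := hstar
  have hvsw : SupPf.SLE vstar w := (hN N le_rfl) ▸ hup N
  have hvlow : SupPf.SLE v vstar := (hN N le_rfl) ▸ hlowiter N
  have hfix : Tsup vstar = vstar := by
    have h1 := hN (N + 1) (Nat.le_succ N)
    rw [Function.iterate_succ_apply', hN N le_rfl] at h1
    exact h1
  -- ns component
  have hnseq : ∀ x, vstar.ns x = c x := by
    intro x
    refine le_antisymm (hvsw.2.1 x) ?_
    calc c x = sup0 {b : ℝ | ∃ y, y ≠ x ∧ b = v.p y x} := hc x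
      _ ≤ sup0 {b : ℝ | ∃ y, y ≠ x ∧ b = vstar.p y x} :=
          SupPf.sup0_mono' (P := fun y => y ≠ x) fun y _ => hvlow.2.2 y x
      _ ≤ (Tsup vstar).ns x := le_max_right _ _
      _ = vstar.ns x := by rw [hfix]
  -- s component
  have hseq : ∀ x, vstar.s x = M x := by
    intro x
    refine le_antisymm (hvsw.1 x) ?_
    have hset : {b : ℝ | ∃ y, y ≠ x ∧ b = vstar.ns y} = {b : ℝ | ∃ z, z ≠ x ∧ b = c z} := by
      simp only [hnseq]
    calc M x = inf1 {b : ℝ | ∃ y, y ≠ x ∧ b = vstar.ns y} := by rw [hset]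
      _ ≤ max (inf1 {b : ℝ | ∃ y, y ≠ x ∧ b = vstar.ns y})
            (inf1 {b : ℝ | ∃ y, y ≠ x ∧ b = vstar.p x y}) := le_max_left _ _
      _ ≤ (Tsup vstar).s x := le_max_right _ _
      _ = vstar.s x := by rw [hfix]
  refine ⟨hnseq, hseq, fun x y hxy => ?_⟩
  refine le_antisymm (hvsw.2.2 x y) (max_le (hvlow.2.2 x y) ?_)
  calc M x = vstar.s x := (hseq x).symm
    _ ≤ max (vstar.s x) (min (vstar.ns y)
          (inf1 {b : ℝ | ∃ z, z ≠ x ∧ z ≠ y ∧ b = vstar.p y z})) := le_max_left _ _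
    _ ≤ (Tsup vstar).p x y := le_max_right _ _
    _ = vstar.p x y := by rw [hfix]
end

section
/- Let f : I → [0,1] be nonnegative numbers with Σ_{x∈I} f_x ≤ 1, let g_x = Σ_{y≠x} f_y, assume f_x ≤ v(p_{xy}) ≤ g_y for all distinct x, y ∈ I, and let the initial valuation have v(s_x) = f_x and v(¬s_x) = g_x for all x. Then x is a supremacy winner, i.e., v*(s_x) ≥ v*(¬s_x) for the upper revised valuation v*, if and only if x maximizes the plurality fraction, i.e., f_x ≥ f_y for all y ∈ I. -/
/-- Plurality rule: with initial beliefs `v(s_x) = f_x` and `v(¬s_x) = g_x`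
as in preferential voting, an option `x` is a supremacy winner iff it
maximizes the plurality fraction `f_x`. -/
theorem stmt9 {I : Type*} [Fintype I] [DecidableEq I]
    (hcard : 2 ≤ Fintype.card I)
    (v : SVal I)
    (f g : I → ℝ)
    (hf0 : ∀ x, 0 ≤ f x) (hf1 : ∀ x, f x ≤ 1) (hfsum : ∑ x, f x ≤ 1)
    (hg : ∀ x, g x = ∑ y ∈ Finset.univ.erase x, f y)
    (hsandwich : ∀ x y : I, x ≠ y → f x ≤ v.p x y ∧ v.p x y ≤ g y)
    (hs : ∀ x, v.s x = f x) (hns : ∀ x, v.ns x = g x)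
    (vstar : SVal I) (hstar : ∃ N : ℕ, ∀ n ≥ N, Tsup^[n] v = vstar)
    (x : I) :
    vstar.ns x ≤ vstar.s x ↔ ∀ y : I, f y ≤ f x := by
  classical
  have hgval : ∀ a, g a = (∑ w, f w) - f a := by
    intro a
    rw [hg a, Finset.sum_erase_eq_sub (Finset.mem_univ a)]
  have hfg : ∀ a b : I, a ≠ b → f a ≤ g b := by
    intro a b hab
    rw [hg b]
    exact Finset.single_le_sum (fun i _ => hf0 i)
      (Finset.mem_erase.mpr ⟨hab, Finset.mem_univ a⟩)
  have hg0 : ∀ a, 0 ≤ g a := by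
    intro a; rw [hg a]; exact Finset.sum_nonneg fun i _ => hf0 i
  have hbdd : ∀ (h : I → ℝ) (P : I → Prop), BddBelow {b : ℝ | ∃ y, P y ∧ b = h y} := by
    intro h P
    refine BddBelow.mono ?_ (Set.finite_range h).bddBelow
    rintro b ⟨y, _, rfl⟩
    exact ⟨y, rfl⟩
  -- invariant along the iteration
  have hinv : ∀ n : ℕ,
      (∀ a, (Tsup^[n] v).ns a = g a) ∧
      (∀ a b, a ≠ b → (Tsup^[n] v).p a b ≤ g b) ∧
      (∀ a b, a ≠ b → (Tsup^[n] v).s a ≤ g b) := by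
    intro n
    induction n with
    | zero =>
      simp only [Function.iterate_zero, id]
      refine ⟨hns, fun a b hab => (hsandwich a b hab).2, fun a b hab => ?_⟩
      rw [hs a]; exact hfg a b hab
    | succ n ih =>
      obtain ⟨ihns, ihp, ihs⟩ := ih
      rw [Function.iterate_succ_apply']
      set w := Tsup^[n] v with hw
      refine ⟨?_, ?_, ?_⟩
      · intro a
        show max (w.ns a) (sup0 {b : ℝ | ∃ y, y ≠ a ∧ b = w.p y a}) = g a
        rw [ihns a]
        refine max_eq_left ?_
        refine Real.sSup_le ?_ (hg0 a)
        rintro b ⟨y, hy, rfl⟩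
        exact ihp y a hy
      · intro a b hab
        show max (w.p a b) (max (w.s a)
            (min (w.ns b) (inf1 {c : ℝ | ∃ z, z ≠ a ∧ z ≠ b ∧ c = w.p b z}))) ≤ g b
        refine max_le (ihp a b hab) (max_le (ihs a b hab) ?_)
        exact le_trans (min_le_left _ _) (le_of_eq (ihns b))
      · intro a b hab
        show max (w.s a) (max (inf1 {c : ℝ | ∃ y, y ≠ a ∧ c = w.ns y})
            (inf1 {c : ℝ | ∃ y, y ≠ a ∧ c = w.p a y})) ≤ g b
        refine max_le (ihs a b hab) (max_le ?_ ?_)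
        · have hne : ({c : ℝ | ∃ y, y ≠ a ∧ c = w.ns y}).Nonempty :=
            ⟨w.ns b, b, hab.symm, rfl⟩
          rw [inf1, if_pos hne]
          calc sInf {c : ℝ | ∃ y, y ≠ a ∧ c = w.ns y}
              ≤ w.ns b := csInf_le (hbdd w.ns _) ⟨b, hab.symm, rfl⟩
            _ = g b := ihns b
        · have hne : ({c : ℝ | ∃ y, y ≠ a ∧ c = w.p a y}).Nonempty :=
            ⟨w.p a b, b, hab.symm, rfl⟩
          rw [inf1, if_pos hne]
          calc sInf {c : ℝ | ∃ y, y ≠ a ∧ c = w.p a y}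
              ≤ w.p a b := csInf_le (hbdd (w.p a) _) ⟨b, hab.symm, rfl⟩
            _ ≤ g b := ihp a b hab
  obtain ⟨N, hN⟩ := hstar
  have hv : vstar = Tsup^[N] v := (hN N le_rfl).symm
  have hfix : Tsup vstar = vstar := by
    have h1 := hN (N + 1) (Nat.le_succ N)
    rw [Function.iterate_succ_apply', hN N le_rfl] at h1
    exact h1
  obtain ⟨hans, hap, has⟩ := hinv N
  have hvns : ∀ a, vstar.ns a = g a := by intro a; rw [hv]; exact hans a
  have hvs : ∀ a b, a ≠ b → vstar.s a ≤ g b := by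
    intro a b h; rw [hv]; exact has a b h
  obtain ⟨y0, hy0⟩ := Fintype.exists_ne_of_one_lt_card (by omega) x
  constructor
  · intro h y
    by_cases hyx : y = x
    · subst hyx; exact le_refl _
    · have h2 := hvs x y (Ne.symm hyx)
      have h1 : g x ≤ g y := le_trans (by rw [← hvns x]; exact h) h2
      have := hgval x; have := hgval y; linarith
  · intro h
    have hgle : ∀ y, g x ≤ g y := by
      intro y; have := h y; have := hgval x; have := hgval y; linarith
    have hA : g x ≤ inf1 {c : ℝ | ∃ y, y ≠ x ∧ c = vstar.ns y} := by
      rw [inf1, if_pos ⟨vstar.ns y0, y0, hy0, rfl⟩]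
      refine le_csInf ⟨vstar.ns y0, y0, hy0, rfl⟩ ?_
      rintro b ⟨y, hy, rfl⟩
      rw [hvns y]; exact hgle y
    have hB : inf1 {c : ℝ | ∃ y, y ≠ x ∧ c = vstar.ns y} ≤ vstar.s x := by
      conv_rhs => rw [← hfix]
      show _ ≤ max (vstar.s x) (max (inf1 {c : ℝ | ∃ y, y ≠ x ∧ c = vstar.ns y})
        (inf1 {c : ℝ | ∃ y, y ≠ x ∧ c = vstar.p x y}))
      exact le_max_of_le_right (le_max_left _ _)
    rw [hvns x]; linarith
end

section
/- Assume v(p_{xy}) + v(p_{yx}) ≤ 1 for all distinct x, y ∈ I and let the initial valuation satisfy v(t_x) = v(¬t_x) = 0 for all x. If a ∈ I is a Condorcet winner, i.e., v(p_{ay}) > 1/2 for every y ≠ a, then the symmetric prominence method accepts a as a prominent option: the upper revised valuation satisfies v*(t_a) > v*(¬t_a). -/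
/-- A valuation for prominence doctrines: degrees of belief for the literals
`t_x` ("x is prominent"), `¬t_x`, and `p_{xy}` ("x is preferable to y", for
distinct `x, y`), under the identification `¬p_{xy} = p_{yx}`. -/
structure PVal (I : Type*) where
  t : I → ℝ
  nt : I → ℝ
  p : I → I → ℝ

/-- The one-step revision operator associated with the symmetric prominence
doctrine, whose clauses are `t_x ∨ ⋁_{y ≠ x} p_{yx}` and `¬t_x ∨ ⋁_{y ≠ x} p_{xy}`. -/
noncomputable def Tsym {I : Type*} (v : PVal I) : PVal I where
  t := fun x => max (v.t x) (inf1 {b : ℝ | ∃ y, y ≠ x ∧ b = v.p x y})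
  nt := fun x => max (v.nt x) (inf1 {b : ℝ | ∃ y, y ≠ x ∧ b = v.p y x})
  p := fun x y => max (v.p x y)
    (max (min (v.t x) (inf1 {b : ℝ | ∃ z, z ≠ x ∧ z ≠ y ∧ b = v.p z x}))
         (min (v.nt y) (inf1 {b : ℝ | ∃ z, z ≠ x ∧ z ≠ y ∧ b = v.p y z})))

lemma setFinite {I : Type*} [Fintype I] (f : I → ℝ) (P : I → Prop) :
    {b : ℝ | ∃ y, P y ∧ b = f y}.Finite := by
  have h : {b : ℝ | ∃ y, P y ∧ b = f y} ⊆ Set.range f := by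
    rintro b ⟨y, _, rfl⟩; exact ⟨y, rfl⟩
  exact (Set.finite_range f).subset h

lemma inf1_le {S : Set ℝ} (hS : S.Finite) {x : ℝ} (hx : x ∈ S) : inf1 S ≤ x := by
  rw [inf1, if_pos ⟨x, hx⟩]
  exact csInf_le hS.bddBelow hx

lemma le_inf1 {S : Set ℝ} (hne : S.Nonempty) {m : ℝ} (h : ∀ x ∈ S, m ≤ x) : m ≤ inf1 S := by
  rw [inf1, if_pos hne]
  exact le_csInf hne h

lemma inv_aux {I : Type*} [Fintype I] (v : PVal I) (a y0 : I) (hy0 : y0 ≠ a) (c : ℝ)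
    (h1 : v.nt a ≤ c) (h2 : ∀ y, y ≠ a → v.t y ≤ c) (h3 : ∀ y, y ≠ a → v.p y a ≤ c) :
    ∀ n : ℕ, (Tsym^[n] v).nt a ≤ c ∧ (∀ y, y ≠ a → (Tsym^[n] v).t y ≤ c) ∧
      (∀ y, y ≠ a → (Tsym^[n] v).p y a ≤ c) := by
  intro n
  induction n with
  | zero => exact ⟨h1, h2, h3⟩
  | succ n ih =>
    obtain ⟨ih1, ih2, ih3⟩ := ih
    rw [Function.iterate_succ_apply']
    set w := Tsym^[n] v with hw
    refine ⟨?_, ?_, ?_⟩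
    · apply max_le ih1
      calc inf1 {b : ℝ | ∃ y, y ≠ a ∧ b = w.p y a}
          ≤ w.p y0 a := inf1_le (setFinite _ _) ⟨y0, hy0, rfl⟩
        _ ≤ c := ih3 y0 hy0
    · intro y hy
      apply max_le (ih2 y hy)
      calc inf1 {b : ℝ | ∃ z, z ≠ y ∧ b = w.p y z}
          ≤ w.p y a := inf1_le (setFinite _ _) ⟨a, Ne.symm hy, rfl⟩
        _ ≤ c := ih3 y hy
    · intro y hy
      apply max_le (ih3 y hy)
      exact max_le (le_trans (min_le_left _ _) (ih2 y hy))
        (le_trans (min_le_left _ _) ih1)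

lemma t_lower {I : Type*} [Fintype I] (v : PVal I) (a y0 : I) (hy0 : y0 ≠ a) (m : ℝ)
    (hm : ∀ y, y ≠ a → m ≤ v.p a y) :
    ∀ n : ℕ, m ≤ (Tsym^[n + 1] v).t a := by
  intro n
  induction n with
  | zero =>
    rw [zero_add, Function.iterate_one]
    show m ≤ max (v.t a) (inf1 {b : ℝ | ∃ y, y ≠ a ∧ b = v.p a y})
    refine le_trans ?_ (le_max_right _ _)
    apply le_inf1
    · exact ⟨v.p a y0, y0, hy0, rfl⟩
    · rintro b ⟨y, hy, rfl⟩
      exact hm y hy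
  | succ n ih =>
    rw [Function.iterate_succ_apply']
    exact le_trans ih (le_max_left _ _)

/-- A Condorcet winner is always accepted as a prominent option by the
symmetric prominence method. -/
theorem stmt12 {I : Type*} [Fintype I] [DecidableEq I]
    (hcard : 2 ≤ Fintype.card I)
    (v : PVal I)
    (hbox : ∀ x y : I, x ≠ y → v.p x y ∈ Set.Icc (0:ℝ) 1)
    (hsum : ∀ x y : I, x ≠ y → v.p x y + v.p y x ≤ 1)
    (ht : ∀ x, v.t x = 0) (hnt : ∀ x, v.nt x = 0)
    (vstar : PVal I) (hstar : ∃ N : ℕ, ∀ n ≥ N, Tsym^[n] v = vstar)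
    (a : I) (hcondorcet : ∀ y : I, y ≠ a → 1 / 2 < v.p a y) :
    vstar.nt a < vstar.t a := by
  obtain ⟨y0, hy0⟩ := Fintype.exists_ne_of_one_lt_card hcard a
  have hne : (Finset.univ.erase a).Nonempty :=
    ⟨y0, Finset.mem_erase.2 ⟨hy0, Finset.mem_univ y0⟩⟩
  set m := (Finset.univ.erase a).inf' hne (fun y => v.p a y) with hm
  have hm_le : ∀ y, y ≠ a → m ≤ v.p a y := fun y hy =>
    Finset.inf'_le _ (Finset.mem_erase.2 ⟨hy, Finset.mem_univ y⟩)
  have hm_gt : 1 / 2 < m := by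
    rw [hm, Finset.lt_inf'_iff]
    intro y hy
    exact hcondorcet y (Finset.mem_erase.1 hy).1
  have hm_le1 : m ≤ 1 := le_trans (hm_le y0 hy0) (hbox a y0 (Ne.symm hy0)).2
  obtain ⟨N, hN⟩ := hstar
  have hvs : vstar = Tsym^[N + 1] v := (hN (N + 1) (Nat.le_succ N)).symm
  have hinv := inv_aux v a y0 hy0 (1 - m)
    (by rw [hnt]; linarith)
    (fun y _ => by rw [ht]; linarith)
    (fun y hy => by have := hsum a y (Ne.symm hy); have := hm_le y hy; linarith)
    (N + 1)
  have hlow := t_lower v a y0 hy0 m hm_le N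
  rw [hvs]
  have h1 : (Tsym^[N + 1] v).nt a ≤ 1 - m := hinv.1
  linarith
end

section
/- For the comprehensive prominence doctrine with initial values v(t_x) = v(¬t_x) = 0 for all x ∈ I, the upper revised valuation v* satisfies: (i) for every y ∈ I, v*(¬t_y) = max over nonempty subsets X ⊆ I \ {y} of (min over r ∈ X, s ∉ X of v(p_{rs})), this value being attained already at the first iterate; and (ii) for every x ∈ I such that t_x is accepted, i.e., v*(t_x) > v*(¬t_x), one has v*(t_x) = min over s ≠ x of v(p_{xs}). -/
/-- The one-step revision operator associated with the comprehensive prominence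
doctrine, whose clauses are indexed by (nonempty) subsets `X ⊆ I`:
`⋁_{r ∈ X} t_r ∨ ⋁_{r ∈ X, s ∉ X} p_{sr}`, `¬t_y ∨ ⋁_{r ∈ X, s ∉ X} p_{sr}`
for `y ∉ X`, and `¬t_x ∨ ¬t_y`; the min over an empty index set is `1` and
the max over an empty index set is `0`. -/
noncomputable def Tcp {I : Type*} (v : PVal I) : PVal I where
  t := fun x => max (v.t x)
    (sup0 {a : ℝ | ∃ X : Finset I, x ∈ X ∧
      a = min (inf1 {b : ℝ | ∃ r ∈ X, r ≠ x ∧ b = v.nt r})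
              (inf1 {b : ℝ | ∃ r ∈ X, ∃ s, s ∉ X ∧ b = v.p r s})})
  nt := fun y => max (v.nt y)
    (max (sup0 {a : ℝ | ∃ r, r ≠ y ∧ a = v.t r})
         (sup0 {a : ℝ | ∃ X : Finset I, X.Nonempty ∧ y ∉ X ∧
           a = inf1 {b : ℝ | ∃ r ∈ X, ∃ s, s ∉ X ∧ b = v.p r s}}))
  p := fun u w => max (v.p u w)
    (sup0 {a : ℝ | ∃ X : Finset I, w ∈ X ∧ u ∉ X ∧
      a = min (max (inf1 {b : ℝ | ∃ r ∈ X, b = v.nt r})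
                   (sup0 {b : ℝ | ∃ s, s ∉ X ∧ b = v.t s}))
              (inf1 {b : ℝ | ∃ r ∈ X, ∃ s, s ∉ X ∧ ¬(r = w ∧ s = u) ∧
                b = v.p r s})})

set_option linter.unusedSectionVars false
set_option linter.unusedVariables false

namespace StmtAux
set_option linter.unusedSectionVars false
set_option linter.unusedVariables false

lemma sup0_le {S : Set ℝ} {c : ℝ} (hc : 0 ≤ c) (h : ∀ a ∈ S, a ≤ c) : sup0 S ≤ c :=
  Real.sSup_le h hc
lemma le_sup0 {S : Set ℝ} {a : ℝ} (hS : S.Finite) (ha : a ∈ S) : a ≤ sup0 S :=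
  le_csSup hS.bddAbove ha
lemma exists_lt_of_lt_sup0 {S : Set ℝ} {c : ℝ} (hS : S.Finite) (hc : 0 ≤ c)
    (h : c < sup0 S) : ∃ a ∈ S, c < a := by
  rcases S.eq_empty_or_nonempty with hE | hne
  · exfalso
    rw [hE] at h
    simp only [sup0, Real.sSup_empty] at h
    linarith
  · exact ⟨sSup S, hne.csSup_mem hS, h⟩
lemma inf1_le {S : Set ℝ} {a : ℝ} (hS : S.Finite) (ha : a ∈ S) : inf1 S ≤ a := by
  rw [inf1, if_pos ⟨a, ha⟩]
  exact csInf_le hS.bddBelow ha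
lemma le_inf1 {S : Set ℝ} {c : ℝ} (hc : c ≤ 1) (h : ∀ a ∈ S, c ≤ a) : c ≤ inf1 S := by
  rw [inf1]
  split_ifs with hne
  · exact le_csInf hne h
  · exact hc
lemma inf1_le_one {S : Set ℝ} (hS : S.Finite) (h : ∀ a ∈ S, a ≤ 1) : inf1 S ≤ 1 := by
  rcases S.eq_empty_or_nonempty with hE | ⟨a, ha⟩
  · rw [inf1]; simp [hE]
  · exact le_trans (inf1_le hS ha) (h a ha)
lemma inf1_mem {S : Set ℝ} (hS : S.Finite) (hne : S.Nonempty) : inf1 S ∈ S := by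
  rw [inf1, if_pos hne]
  exact hne.csInf_mem hS
lemma fin_sub {α : Type*} [Finite α] (f : α → ℝ) {S : Set ℝ} (h : S ⊆ Set.range f) :
    S.Finite := (Set.finite_range f).subset h

variable {I : Type*} [Fintype I] [DecidableEq I]

noncomputable def cutF (v : PVal I) (X : Finset I) : ℝ :=
  inf1 {b : ℝ | ∃ r ∈ X, ∃ s, s ∉ X ∧ b = v.p r s}

noncomputable def Bv (v : PVal I) (y : I) : ℝ :=
  sup0 {a : ℝ | ∃ X : Finset I, X.Nonempty ∧ y ∉ X ∧ a = cutF v X}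

noncomputable def mv (v : PVal I) (x : I) : ℝ :=
  inf1 {b : ℝ | ∃ s, s ≠ x ∧ b = v.p x s}

lemma fin_cut (v : PVal I) (X : Finset I) :
    ({b : ℝ | ∃ r ∈ X, ∃ s, s ∉ X ∧ b = v.p r s}).Finite :=
  fin_sub (fun rs : I × I => v.p rs.1 rs.2)
    (by rintro b ⟨r, hr, s, hs, rfl⟩; exact ⟨(r, s), rfl⟩)

lemma fin_B (v : PVal I) (y : I) :
    ({a : ℝ | ∃ X : Finset I, X.Nonempty ∧ y ∉ X ∧ a = cutF v X}).Finite :=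
  fin_sub (fun X : Finset I => cutF v X)
    (by rintro a ⟨X, _, _, rfl⟩; exact ⟨X, rfl⟩)

lemma fin_m (v : PVal I) (x : I) :
    ({b : ℝ | ∃ s, s ≠ x ∧ b = v.p x s}).Finite :=
  fin_sub (fun s : I => v.p x s) (by rintro b ⟨s, _, rfl⟩; exact ⟨s, rfl⟩)

lemma cut_le_edge (v : PVal I) {X : Finset I} {r s : I} (hr : r ∈ X) (hs : s ∉ X) :
    cutF v X ≤ v.p r s :=
  inf1_le (fin_cut v X) ⟨r, hr, s, hs, rfl⟩

lemma cut_le_B (v : PVal I) {X : Finset I} {y : I} (hX : X.Nonempty) (hy : y ∉ X) :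
    cutF v X ≤ Bv v y :=
  le_sup0 (fin_B v y) ⟨X, hX, hy, rfl⟩

section withbox
variable {v : PVal I} (hbox : ∀ x y : I, x ≠ y → v.p x y ∈ Set.Icc (0:ℝ) 1)
include hbox

lemma cut_nonneg (X : Finset I) : 0 ≤ cutF v X := by
  refine le_inf1 zero_le_one ?_
  rintro b ⟨r, hr, s, hs, rfl⟩
  exact (hbox r s (fun h => hs (h ▸ hr))).1

lemma cut_le_one (X : Finset I) : cutF v X ≤ 1 := by
  refine inf1_le_one (fin_cut v X) ?_
  rintro b ⟨r, hr, s, hs, rfl⟩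
  exact (hbox r s (fun h => hs (h ▸ hr))).2

lemma m_nonneg (x : I) : 0 ≤ mv v x := by
  refine le_inf1 zero_le_one ?_
  rintro b ⟨s, hs, rfl⟩
  exact (hbox x s (Ne.symm hs)).1

lemma m_le_one (x : I) : mv v x ≤ 1 := by
  refine inf1_le_one (fin_m v x) ?_
  rintro b ⟨s, hs, rfl⟩
  exact (hbox x s (Ne.symm hs)).2

lemma B_le_one (y : I) : Bv v y ≤ 1 :=
  sup0_le zero_le_one (by rintro a ⟨X, _, _, rfl⟩; exact cut_le_one hbox X)

variable (hcard : 2 ≤ Fintype.card I)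
include hcard

lemma B_nonneg (y : I) : 0 ≤ Bv v y := by
  obtain ⟨z, hz⟩ := Fintype.exists_ne_of_one_lt_card (by omega) y
  refine le_trans (cut_nonneg hbox {z}) (cut_le_B v ⟨z, Finset.mem_singleton_self z⟩ ?_)
  simp only [Finset.mem_singleton]
  exact fun h => hz h.symm

lemma B_le_max {x s : I} (hsx : s ≠ x) : Bv v s ≤ max (Bv v x) (v.p x s) := by
  refine sup0_le (le_trans (B_nonneg hbox hcard x) (le_max_left _ _)) ?_
  rintro a ⟨Z, hZ, hsZ, rfl⟩
  by_cases hx : x ∈ Z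
  · exact le_trans (cut_le_edge v hx hsZ) (le_max_right _ _)
  · exact le_trans (cut_le_B v hZ hx) (le_max_left _ _)

lemma m_eq_cut_singleton (x : I) : mv v x = cutF v {x} := by
  unfold mv cutF
  congr 1
  ext b
  simp only [Set.mem_setOf_eq, Finset.mem_singleton]
  constructor
  · rintro ⟨s, hs, rfl⟩; exact ⟨x, rfl, s, hs, rfl⟩
  · rintro ⟨r, rfl, s, hs, rfl⟩; exact ⟨s, hs, rfl⟩

lemma m_attained (x : I) : ∃ s, s ≠ x ∧ v.p x s = mv v x := by
  obtain ⟨z, hz⟩ := Fintype.exists_ne_of_one_lt_card (by omega) x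
  have hne : ({b : ℝ | ∃ s, s ≠ x ∧ b = v.p x s}).Nonempty := ⟨v.p x z, z, hz, rfl⟩
  obtain ⟨s, hs, heq⟩ := inf1_mem (fin_m v x) hne
  exact ⟨s, hs, heq.symm⟩


end withbox

lemma cut_congr {w1 w2 : PVal I} {X : Finset I}
    (h : ∀ r ∈ X, ∀ s ∉ X, w1.p r s = w2.p r s) : cutF w1 X = cutF w2 X := by
  unfold cutF
  congr 1
  ext b
  constructor
  · rintro ⟨r, hr, s, hs, rfl⟩; exact ⟨r, hr, s, hs, h r hr s hs⟩
  · rintro ⟨r, hr, s, hs, rfl⟩; exact ⟨r, hr, s, hs, (h r hr s hs).symm⟩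

section base
variable {v : PVal I} (hbox : ∀ x y : I, x ≠ y → v.p x y ∈ Set.Icc (0:ℝ) 1)
  (hcard : 2 ≤ Fintype.card I) (ht0 : ∀ x, v.t x = 0) (hnt0 : ∀ x, v.nt x = 0)
include hbox hcard ht0 hnt0

lemma t_one (x : I) : (Tcp v).t x = mv v x := by
  show max (v.t x)
    (sup0 {a : ℝ | ∃ X : Finset I, x ∈ X ∧
      a = min (inf1 {b : ℝ | ∃ r ∈ X, r ≠ x ∧ b = v.nt r})
              (inf1 {b : ℝ | ∃ r ∈ X, ∃ s, s ∉ X ∧ b = v.p r s})}) = mv v x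
  rw [ht0 x]
  have hsup : sup0 {a : ℝ | ∃ X : Finset I, x ∈ X ∧
      a = min (inf1 {b : ℝ | ∃ r ∈ X, r ≠ x ∧ b = v.nt r})
              (inf1 {b : ℝ | ∃ r ∈ X, ∃ s, s ∉ X ∧ b = v.p r s})} = mv v x := by
    apply le_antisymm
    · refine sup0_le (m_nonneg hbox x) ?_
      rintro a ⟨X, hxX, rfl⟩
      by_cases hex : ∃ r ∈ X, r ≠ x
      · obtain ⟨r, hr, hrx⟩ := hex
        have h1 : inf1 {b : ℝ | ∃ r ∈ X, r ≠ x ∧ b = v.nt r} ≤ 0 := by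
          have := inf1_le (S := {b : ℝ | ∃ r ∈ X, r ≠ x ∧ b = v.nt r})
            (fin_sub (fun r : I => v.nt r)
              (by rintro b ⟨r, hr, _, rfl⟩; exact ⟨r, rfl⟩)) ⟨r, hr, hrx, rfl⟩
          rw [hnt0 r] at this
          exact this
        exact le_trans (le_trans (min_le_left _ _) h1) (m_nonneg hbox x)
      · have hX : X = {x} := by
          push_neg at hex
          ext a
          simp only [Finset.mem_singleton]
          exact ⟨fun ha => hex a ha, fun ha => ha ▸ hxX⟩
        subst hX
        refine le_trans (min_le_right _ _) ?_
        exact le_of_eq (m_eq_cut_singleton hbox hcard x).symm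
    · refine le_sup0 (fin_sub (fun X : Finset I =>
        min (inf1 {b : ℝ | ∃ r ∈ X, r ≠ x ∧ b = v.nt r})
            (inf1 {b : ℝ | ∃ r ∈ X, ∃ s, s ∉ X ∧ b = v.p r s}))
        (by rintro a ⟨X, _, rfl⟩; exact ⟨X, rfl⟩)) ?_
      refine ⟨{x}, Finset.mem_singleton_self x, ?_⟩
      have hS1 : inf1 {b : ℝ | ∃ r ∈ ({x} : Finset I), r ≠ x ∧ b = v.nt r} = 1 := by
        rw [inf1, if_neg]
        rintro ⟨b, r, hr, hrx, rfl⟩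
        exact hrx (Finset.mem_singleton.mp hr)
      rw [hS1]
      have h1c : min (1:ℝ) (cutF v {x}) = cutF v {x} :=
        min_eq_right (cut_le_one hbox {x})
      exact (m_eq_cut_singleton hbox hcard x).trans h1c.symm
  rw [hsup]
  exact max_eq_right (m_nonneg hbox x)

lemma nt_one (y : I) : (Tcp v).nt y = Bv v y := by
  show max (v.nt y)
    (max (sup0 {a : ℝ | ∃ r, r ≠ y ∧ a = v.t r})
         (sup0 {a : ℝ | ∃ X : Finset I, X.Nonempty ∧ y ∉ X ∧
           a = inf1 {b : ℝ | ∃ r ∈ X, ∃ s, s ∉ X ∧ b = v.p r s}})) = Bv v y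
  have h3 : sup0 {a : ℝ | ∃ X : Finset I, X.Nonempty ∧ y ∉ X ∧
      a = inf1 {b : ℝ | ∃ r ∈ X, ∃ s, s ∉ X ∧ b = v.p r s}} = Bv v y := rfl
  rw [hnt0 y, h3]
  have h2 : sup0 {a : ℝ | ∃ r, r ≠ y ∧ a = v.t r} ≤ Bv v y := by
    refine sup0_le (B_nonneg hbox hcard y) ?_
    rintro a ⟨r, hr, rfl⟩
    rw [ht0 r]; exact B_nonneg hbox hcard y
  rw [max_eq_right h2, max_eq_right (B_nonneg hbox hcard y)]

lemma p_one {u z : I} (huz : u ≠ z) : (Tcp v).p u z = v.p u z := by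
  show max (v.p u z)
    (sup0 {a : ℝ | ∃ X : Finset I, z ∈ X ∧ u ∉ X ∧
      a = min (max (inf1 {b : ℝ | ∃ r ∈ X, b = v.nt r})
                   (sup0 {b : ℝ | ∃ s, s ∉ X ∧ b = v.t s}))
              (inf1 {b : ℝ | ∃ r ∈ X, ∃ s, s ∉ X ∧ ¬(r = z ∧ s = u) ∧
                b = v.p r s})}) = v.p u z
  refine max_eq_left (sup0_le (hbox u z huz).1 ?_)
  rintro a ⟨X, hzX, huX, rfl⟩
  refine le_trans (min_le_left _ _) (le_trans (max_le ?_ ?_) (hbox u z huz).1)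
  · have := inf1_le (S := {b : ℝ | ∃ r ∈ X, b = v.nt r})
      (fin_sub (fun r : I => v.nt r) (by rintro b ⟨r, _, rfl⟩; exact ⟨r, rfl⟩))
      ⟨z, hzX, rfl⟩
    rw [hnt0 z] at this
    exact this
  · refine sup0_le le_rfl ?_
    rintro b ⟨s, _, rfl⟩
    exact le_of_eq (ht0 s)

end base

open Classical in
noncomputable def lowE (w : PVal I) (β : ℝ) (U : Finset I) : Finset (I × I) :=
  Finset.univ.filter (fun ab => ab.1 ∈ U ∧ ab.2 ∉ U ∧ w.p ab.1 ab.2 ≤ β)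

lemma mem_lowE {w : PVal I} {β : ℝ} {U : Finset I} {ab : I × I} :
    ab ∈ lowE w β U ↔ ab.1 ∈ U ∧ ab.2 ∉ U ∧ w.p ab.1 ab.2 ≤ β := by
  classical
  simp [lowE]

lemma Tcp_t (w : PVal I) (x : I) : (Tcp w).t x = max (w.t x)
    (sup0 {a : ℝ | ∃ X : Finset I, x ∈ X ∧
      a = min (inf1 {b : ℝ | ∃ r ∈ X, r ≠ x ∧ b = w.nt r}) (cutF w X)}) := rfl

lemma Tcp_nt (w : PVal I) (y : I) : (Tcp w).nt y = max (w.nt y)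
    (max (sup0 {a : ℝ | ∃ r, r ≠ y ∧ a = w.t r})
         (sup0 {a : ℝ | ∃ X : Finset I, X.Nonempty ∧ y ∉ X ∧ a = cutF w X})) := rfl

lemma Tcp_p (w : PVal I) (u z : I) : (Tcp w).p u z = max (w.p u z)
    (sup0 {a : ℝ | ∃ X : Finset I, z ∈ X ∧ u ∉ X ∧
      a = min (max (inf1 {b : ℝ | ∃ r ∈ X, b = w.nt r})
                   (sup0 {b : ℝ | ∃ s, s ∉ X ∧ b = w.t s}))
              (inf1 {b : ℝ | ∃ r ∈ X, ∃ s, s ∉ X ∧ ¬(r = z ∧ s = u) ∧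
                b = w.p r s})}) := rfl

structure Inv (v w : PVal I) : Prop where
  hnt : ∀ y, w.nt y = Bv v y
  ht1 : ∀ r y, r ≠ y → w.t r ≤ Bv v y
  htc : ∀ x, w.t x ≤ max (Bv v x) (mv v x)
  hc0 : ∀ X : Finset I, X.Nonempty → ∀ y, y ∉ X → cutF w X ≤ Bv v y
  hsw : ∀ x, ∃ s, s ≠ x ∧ w.p x s ≤ max (Bv v x) (mv v x)
  hq : ∀ u z, v.p u z ≤ w.p u z
  hbt : ∀ x, w.t x ≤ 1
  hbp : ∀ u z, u ≠ z → w.p u z ≤ 1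

section step
variable {v w : PVal I} (hbox : ∀ x y : I, x ≠ y → v.p x y ∈ Set.Icc (0:ℝ) 1)
  (hcard : 2 ≤ Fintype.card I) (H : Inv v w)
include hbox hcard H

lemma C0_step {y : I} {U : Finset I} (hUne : U.Nonempty) (hyU : y ∉ U) :
    cutF (Tcp w) U ≤ Bv v y := by
  classical
  set β := Bv v y with hβdef
  have hβ0 : 0 ≤ β := B_nonneg hbox hcard y
  have key : ∀ (U : Finset I), U.Nonempty → y ∉ U → β < cutF (Tcp w) U →
      ∃ U' : Finset I, U'.Nonempty ∧ y ∉ U' ∧ β < cutF (Tcp w) U' ∧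
        (lowE w β U').card < (lowE w β U).card := by
    intro U hUne hyU hcon
    have hedge : ∀ r ∈ U, ∀ s, s ∉ U → β < (Tcp w).p r s := fun r hr s hs =>
      lt_of_lt_of_le hcon (cut_le_edge (Tcp w) hr hs)
    have hcut : cutF w U ≤ β := H.hc0 U hUne y hyU
    have hne : ({b : ℝ | ∃ r ∈ U, ∃ s, s ∉ U ∧ b = w.p r s}).Nonempty := by
      obtain ⟨u0, hu0⟩ := hUne
      exact ⟨w.p u0 y, u0, hu0, y, hyU, rfl⟩
    obtain ⟨r, hrU, s, hsU, hval⟩ := inf1_mem (fin_cut w U) hne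
    have hlow : w.p r s ≤ β := by rw [← hval]; exact hcut
    have hb : β < (Tcp w).p r s := hedge r hrU s hsU
    rw [Tcp_p] at hb
    have hsup : β < sup0 {a : ℝ | ∃ X : Finset I, s ∈ X ∧ r ∉ X ∧
        a = min (max (inf1 {b : ℝ | ∃ r' ∈ X, b = w.nt r'})
                     (sup0 {b : ℝ | ∃ s', s' ∉ X ∧ b = w.t s'}))
                (inf1 {b : ℝ | ∃ r' ∈ X, ∃ s', s' ∉ X ∧ ¬(r' = s ∧ s' = r) ∧
                  b = w.p r' s'})} :=
      (lt_max_iff.mp hb).resolve_left (not_lt.mpr hlow)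
    obtain ⟨a, ⟨Y, hsY, hrY, rfl⟩, ha⟩ := exists_lt_of_lt_sup0
      (fin_sub (fun X : Finset I => min (max (inf1 {b : ℝ | ∃ r' ∈ X, b = w.nt r'})
                     (sup0 {b : ℝ | ∃ s', s' ∉ X ∧ b = w.t s'}))
                (inf1 {b : ℝ | ∃ r' ∈ X, ∃ s', s' ∉ X ∧ ¬(r' = s ∧ s' = r) ∧
                  b = w.p r' s'}))
        (by rintro a ⟨X, _, _, rfl⟩; exact ⟨X, rfl⟩)) hβ0 hsup
    have hE1 : β < max (inf1 {b : ℝ | ∃ r' ∈ Y, b = w.nt r'})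
        (sup0 {b : ℝ | ∃ s', s' ∉ Y ∧ b = w.t s'}) :=
      lt_of_lt_of_le ha (min_le_left _ _)
    have hE2 : ∀ a ∈ Y, ∀ b, b ∉ Y → ¬(a = s ∧ b = r) → β < w.p a b := by
      intro a haY b hbY hne2
      refine lt_of_lt_of_le (lt_of_lt_of_le ha (min_le_right _ _)) ?_
      exact inf1_le (fin_sub (fun rs : I × I => w.p rs.1 rs.2)
        (by rintro b ⟨r', _, s', _, _, rfl⟩; exact ⟨(r', s'), rfl⟩))
        ⟨a, haY, b, hbY, hne2, rfl⟩
    have hyY : y ∉ Y := by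
      intro hyY
      rcases lt_max_iff.mp hE1 with h | h
      · have hle : inf1 {b : ℝ | ∃ r' ∈ Y, b = w.nt r'} ≤ β := by
          have := inf1_le (S := {b : ℝ | ∃ r' ∈ Y, b = w.nt r'})
            (fin_sub (fun r' : I => w.nt r')
              (by rintro b ⟨r', _, rfl⟩; exact ⟨r', rfl⟩)) ⟨y, hyY, rfl⟩
          rw [H.hnt y] at this
          exact this
        exact absurd (lt_of_lt_of_le h hle) (lt_irrefl β)
      · obtain ⟨b, ⟨c, hcY, rfl⟩, hb2⟩ := exists_lt_of_lt_sup0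
          (fin_sub (fun c : I => w.t c) (by rintro b ⟨c, _, rfl⟩; exact ⟨c, rfl⟩))
          hβ0 h
        by_cases hcy : c = y
        · subst hcy; exact hcY hyY
        · exact absurd hb2 (not_lt.mpr (H.ht1 c y hcy))
    have hyUY : y ∉ U ∪ Y := by
      intro h
      rcases Finset.mem_union.mp h with h | h
      · exact hyU h
      · exact hyY h
    have hpt : ∀ a ∈ U ∪ Y, ∀ b, b ∉ U ∪ Y → β < (Tcp w).p a b := by
      intro a haUY b hbUY
      have hbU : b ∉ U := fun h => hbUY (Finset.mem_union_left _ h)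
      have hbY : b ∉ Y := fun h => hbUY (Finset.mem_union_right _ h)
      rcases Finset.mem_union.mp haUY with haU | haY
      · exact hedge a haU b hbU
      · refine lt_of_lt_of_le (hE2 a haY b hbY ?_) ?_
        · rintro ⟨-, rfl⟩; exact hbU hrU
        · rw [Tcp_p]; exact le_max_left _ _
    refine ⟨U ∪ Y, ⟨r, Finset.mem_union_left _ hrU⟩, hyUY, ?_, ?_⟩
    · have hne' : ({b : ℝ | ∃ a ∈ U ∪ Y, ∃ c, c ∉ U ∪ Y ∧ b = (Tcp w).p a c}).Nonempty :=
        ⟨(Tcp w).p r y, r, Finset.mem_union_left _ hrU, y, hyUY, rfl⟩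
      obtain ⟨a, haUY, c, hcUY, hval'⟩ := inf1_mem (fin_cut (Tcp w) (U ∪ Y)) hne'
      have : cutF (Tcp w) (U ∪ Y) = (Tcp w).p a c := hval'
      rw [this]
      exact hpt a haUY c hcUY
    · have hsub : lowE w β (U ∪ Y) ⊆ (lowE w β U).erase (r, s) := by
        intro ab hab
        obtain ⟨haUY, hbUY, hple⟩ := mem_lowE.mp hab
        have hbU : ab.2 ∉ U := fun h => hbUY (Finset.mem_union_left _ h)
        have hbY : ab.2 ∉ Y := fun h => hbUY (Finset.mem_union_right _ h)
        have haU : ab.1 ∈ U := by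
          rcases Finset.mem_union.mp haUY with h | h
          · exact h
          · exfalso
            refine absurd hple (not_le.mpr (hE2 ab.1 h ab.2 hbY ?_))
            rintro ⟨-, h2⟩; exact hbU (h2 ▸ hrU)
        refine Finset.mem_erase.mpr ⟨?_, mem_lowE.mpr ⟨haU, hbU, hple⟩⟩
        intro he
        rw [he] at hbY
        exact hbY hsY
      have hrs : (r, s) ∈ lowE w β U := mem_lowE.mpr ⟨hrU, hsU, hlow⟩
      calc (lowE w β (U ∪ Y)).card ≤ ((lowE w β U).erase (r, s)).card :=
            Finset.card_le_card hsub
        _ < (lowE w β U).card := Finset.card_erase_lt_of_mem hrs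
  have main : ∀ (k : ℕ) (U : Finset I), (lowE w β U).card ≤ k → U.Nonempty → y ∉ U →
      ¬ β < cutF (Tcp w) U := by
    intro k
    induction k with
    | zero =>
      intro U hc h1 h2 h3
      obtain ⟨U', _, _, _, hlt⟩ := key U h1 h2 h3
      omega
    | succ n IH =>
      intro U hc h1 h2 h3
      obtain ⟨U', h1', h2', h3', hlt⟩ := key U h1 h2 h3
      exact IH U' (by omega) h1' h2' h3'
  exact not_lt.mp (main (lowE w β U).card U le_rfl hUne hyU)

lemma nt_step (y : I) : (Tcp w).nt y = Bv v y := by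
  rw [Tcp_nt, H.hnt y]
  have hB0 := B_nonneg hbox hcard y
  have h2 : sup0 {a : ℝ | ∃ r, r ≠ y ∧ a = w.t r} ≤ Bv v y := by
    refine sup0_le hB0 ?_
    rintro a ⟨r, hr, rfl⟩
    exact H.ht1 r y hr
  have h3 : sup0 {a : ℝ | ∃ X : Finset I, X.Nonempty ∧ y ∉ X ∧ a = cutF w X} ≤ Bv v y := by
    refine sup0_le hB0 ?_
    rintro a ⟨X, hX, hyX, rfl⟩
    exact H.hc0 X hX y hyX
  rw [max_eq_left (max_le h2 h3)]

lemma t_step_le {x y : I} (hs0 : ∀ X : Finset I, x ∈ X →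
      min (inf1 {b : ℝ | ∃ r ∈ X, r ≠ x ∧ b = w.nt r}) (cutF w X) ≤ Bv v y)
    (htx : w.t x ≤ Bv v y) : (Tcp w).t x ≤ Bv v y := by
  rw [Tcp_t]
  refine max_le htx (sup0_le (B_nonneg hbox hcard y) ?_)
  rintro a ⟨X, hxX, rfl⟩
  exact hs0 X hxX

lemma t1_step {r y : I} (hry : r ≠ y) : (Tcp w).t r ≤ Bv v y := by
  refine t_step_le hbox hcard H ?_ (H.ht1 r y hry)
  intro X hrX
  by_cases hyX : y ∈ X
  · refine le_trans (min_le_left _ _) ?_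
    have := inf1_le (S := {b : ℝ | ∃ r' ∈ X, r' ≠ r ∧ b = w.nt r'})
      (fin_sub (fun r' : I => w.nt r') (by rintro b ⟨r', _, _, rfl⟩; exact ⟨r', rfl⟩))
      ⟨y, hyX, fun h => hry h.symm, rfl⟩
    rw [H.hnt y] at this
    exact this
  · exact le_trans (min_le_right _ _) (H.hc0 X ⟨r, hrX⟩ y hyX)

lemma tc_step (x : I) : (Tcp w).t x ≤ max (Bv v x) (mv v x) := by
  obtain ⟨s0, hs0x, hs0⟩ := H.hsw x
  set c := max (Bv v x) (mv v x) with hc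
  have hc0 : 0 ≤ c := le_trans (B_nonneg hbox hcard x) (le_max_left _ _)
  rw [Tcp_t]
  refine max_le (H.htc x) (sup0_le hc0 ?_)
  rintro a ⟨X, hxX, rfl⟩
  by_cases hs0X : s0 ∈ X
  · refine le_trans (min_le_left _ _) ?_
    have h1 : inf1 {b : ℝ | ∃ r ∈ X, r ≠ x ∧ b = w.nt r} ≤ w.nt s0 :=
      inf1_le (fin_sub (fun r' : I => w.nt r')
        (by rintro b ⟨r', _, _, rfl⟩; exact ⟨r', rfl⟩)) ⟨s0, hs0X, hs0x, rfl⟩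
    rw [H.hnt s0] at h1
    refine le_trans (le_trans h1 (B_le_max hbox hcard (x := x) (s := s0) hs0x)) ?_
    refine max_le (le_max_left _ _) ?_
    exact le_trans (le_trans (H.hq x s0) hs0) le_rfl
  · exact le_trans (min_le_right _ _) (le_trans (cut_le_edge w hxX hs0X) hs0)

lemma s_step (x : I) : ∃ s, s ≠ x ∧ (Tcp w).p x s ≤ max (Bv v x) (mv v x) := by
  obtain ⟨s0, hs0x, hs0⟩ := H.hsw x
  set c := max (Bv v x) (mv v x) with hc
  have hc0 : 0 ≤ c := le_trans (B_nonneg hbox hcard x) (le_max_left _ _)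
  refine ⟨s0, hs0x, ?_⟩
  rw [Tcp_p]
  refine max_le hs0 (sup0_le hc0 ?_)
  rintro a ⟨Y, hs0Y, hxY, rfl⟩
  refine le_trans (min_le_left _ _) (max_le ?_ ?_)
  · have h1 : inf1 {b : ℝ | ∃ r ∈ Y, b = w.nt r} ≤ w.nt s0 :=
      inf1_le (fin_sub (fun r' : I => w.nt r')
        (by rintro b ⟨r', _, rfl⟩; exact ⟨r', rfl⟩)) ⟨s0, hs0Y, rfl⟩
    rw [H.hnt s0] at h1
    refine le_trans (le_trans h1 (B_le_max hbox hcard (x := x) (s := s0) hs0x)) ?_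
    exact max_le (le_max_left _ _) (le_trans (le_trans (H.hq x s0) hs0) le_rfl)
  · refine sup0_le hc0 ?_
    rintro b ⟨s', _, rfl⟩
    by_cases hsx : s' = x
    · subst hsx; exact H.htc s'
    · exact le_trans (H.ht1 s' x hsx) (le_max_left _ _)

lemma bt_step (x : I) : (Tcp w).t x ≤ 1 := by
  rw [Tcp_t]
  refine max_le (H.hbt x) (sup0_le zero_le_one ?_)
  rintro a ⟨X, hxX, rfl⟩
  refine le_trans (min_le_right _ _) ?_
  refine inf1_le_one (fin_cut w X) ?_
  rintro b ⟨r, hr, s, hs, rfl⟩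
  exact H.hbp r s (fun h => hs (h ▸ hr))

lemma bp_step {u z : I} (huz : u ≠ z) : (Tcp w).p u z ≤ 1 := by
  rw [Tcp_p]
  refine max_le (H.hbp u z huz) (sup0_le zero_le_one ?_)
  rintro a ⟨X, hzX, huX, rfl⟩
  refine le_trans (min_le_left _ _) (max_le ?_ ?_)
  · refine inf1_le_one (fin_sub (fun r' : I => w.nt r')
      (by rintro b ⟨r', _, rfl⟩; exact ⟨r', rfl⟩)) ?_
    rintro b ⟨r, hrX, rfl⟩
    rw [H.hnt r]
    exact B_le_one hbox r
  · refine sup0_le zero_le_one ?_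
    rintro b ⟨s, _, rfl⟩
    exact H.hbt s

lemma inv_step : Inv v (Tcp w) where
  hnt := nt_step hbox hcard H
  ht1 := fun r y hry => t1_step hbox hcard H hry
  htc := tc_step hbox hcard H
  hc0 := fun X hX y hyX => C0_step hbox hcard H hX hyX
  hsw := s_step hbox hcard H
  hq := fun u z => le_trans (H.hq u z) (by rw [Tcp_p]; exact le_max_left _ _)
  hbt := bt_step hbox hcard H
  hbp := fun u z huz => bp_step hbox hcard H huz

end step

section basewrap
variable {v : PVal I} (hbox : ∀ x y : I, x ≠ y → v.p x y ∈ Set.Icc (0:ℝ) 1)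
  (hcard : 2 ≤ Fintype.card I) (ht0 : ∀ x, v.t x = 0) (hnt0 : ∀ x, v.nt x = 0)
include hbox hcard ht0 hnt0

lemma inv_base : Inv v (Tcp v) where
  hnt := nt_one hbox hcard ht0 hnt0
  ht1 := by
    intro r y hry
    rw [t_one hbox hcard ht0 hnt0 r, m_eq_cut_singleton hbox hcard r]
    refine cut_le_B v ⟨r, Finset.mem_singleton_self r⟩ ?_
    simp only [Finset.mem_singleton]
    exact fun h => hry h.symm
  htc := by
    intro x
    rw [t_one hbox hcard ht0 hnt0 x]
    exact le_max_right _ _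
  hc0 := by
    intro X hX y hyX
    have hcc : cutF (Tcp v) X = cutF v X :=
      cut_congr (fun r hr s hs => p_one hbox hcard ht0 hnt0 (fun h => hs (h ▸ hr)))
    rw [hcc]
    exact cut_le_B v hX hyX
  hsw := by
    intro x
    obtain ⟨s, hs, hps⟩ := m_attained hbox hcard x
    refine ⟨s, hs, ?_⟩
    rw [p_one hbox hcard ht0 hnt0 (Ne.symm hs), hps]
    exact le_max_right _ _
  hq := fun u z => by rw [Tcp_p]; exact le_max_left _ _
  hbt := by
    intro x
    rw [t_one hbox hcard ht0 hnt0 x]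
    exact m_le_one hbox x
  hbp := by
    intro u z huz
    rw [p_one hbox hcard ht0 hnt0 huz]
    exact (hbox u z huz).2

lemma inv_iter : ∀ n : ℕ, Inv v (Tcp^[n + 1] v) := by
  intro n
  induction n with
  | zero => exact inv_base hbox hcard ht0 hnt0
  | succ m IH =>
    rw [Function.iterate_succ_apply']
    exact inv_step hbox hcard IH

end basewrap

lemma t_le_iter (u : PVal I) (x : I) : ∀ n : ℕ, u.t x ≤ (Tcp^[n] u).t x := by
  intro n
  induction n with
  | zero => exact le_rfl
  | succ m IH =>
    rw [Function.iterate_succ_apply']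
    refine le_trans IH ?_
    rw [Tcp_t]
    exact le_max_left _ _

end StmtAux

open StmtAux

/-- For the comprehensive prominence doctrine with zero initial belief in the
`t_x` and `¬t_x`: (i) `v*(¬t_y)` is the max over nonempty `X ⊆ I \ {y}` of the
min over `r ∈ X, s ∉ X` of `v(p_{rs})`, attained already at the first iterate;
(ii) if `t_x` is accepted then `v*(t_x) = min_{s ≠ x} v(p_{xs})`. -/
theorem stmt14 {I : Type*} [Fintype I] [DecidableEq I]
    (hcard : 2 ≤ Fintype.card I)
    (v : PVal I)
    (hbox : ∀ x y : I, x ≠ y → v.p x y ∈ Set.Icc (0:ℝ) 1)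
    (ht : ∀ x, v.t x = 0) (hnt : ∀ x, v.nt x = 0)
    (vstar : PVal I) (hstar : ∃ N : ℕ, ∀ n ≥ N, Tcp^[n] v = vstar) :
    (∀ y : I,
      vstar.nt y = sup0 {a : ℝ | ∃ X : Finset I, X.Nonempty ∧ y ∉ X ∧
        a = inf1 {b : ℝ | ∃ r ∈ X, ∃ s, s ∉ X ∧ b = v.p r s}} ∧
      vstar.nt y = (Tcp v).nt y) ∧
    (∀ x : I, vstar.nt x < vstar.t x →
      vstar.t x = inf1 {b : ℝ | ∃ s, s ≠ x ∧ b = v.p x s}) := by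
  classical
  obtain ⟨N, hN⟩ := hstar
  have hfix : Tcp^[N + 1] v = vstar := hN (N + 1) (Nat.le_succ N)
  have HI : Inv v vstar := hfix ▸ StmtAux.inv_iter hbox hcard ht hnt N
  constructor
  · intro y
    refine ⟨HI.hnt y, ?_⟩
    rw [HI.hnt y, StmtAux.nt_one hbox hcard ht hnt y]
  · intro x hlt
    have h2 : Bv v x < vstar.t x := by rw [← HI.hnt x]; exact hlt
    have hub : vstar.t x ≤ mv v x := by
      rcases le_max_iff.mp (HI.htc x) with h | h
      · exact absurd h2 (not_lt.mpr h)
      · exact h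
    have hlb : mv v x ≤ vstar.t x := by
      rw [← hfix]
      have hm := StmtAux.t_le_iter (Tcp v) x N
      rw [StmtAux.t_one hbox hcard ht hnt x] at hm
      calc mv v x ≤ (Tcp^[N] (Tcp v)).t x := hm
        _ = (Tcp^[N + 1] v).t x := by rw [← Function.iterate_succ_apply]
    exact le_antisymm hub hlb
end

section
/- Assume v(p_{xy}) + v(p_{yx}) ≤ 1 for all distinct x, y ∈ I and initial values v(t_x) = v(¬t_x) = 0 for all x. If S ⊆ I is a nonempty majority-dominant set, i.e., v(p_{xy}) > 1/2 for every x ∈ S and y ∉ S, then the upper revised valuation v* satisfies v*(p_{yx}) ≤ 1/2 whenever x ∈ S and y ∉ S. Consequently, for every x ∈ S and y ∉ S the comprehensive prominence method accepts p_{xy}: v*(p_{xy}) > v*(p_{yx}). -/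
/-- If `c` is nonnegative and `c < sup0 s` then some element of `s` exceeds `c`. -/
lemma lt_of_lt_sup0 {s : Set ℝ} {c : ℝ} (hc : 0 ≤ c) (h : c < sup0 s) :
    ∃ a ∈ s, c < a := by
  by_contra hcon
  push_neg at hcon
  have := Real.sSup_le hcon hc
  simp only [sup0] at h
  linarith

/-- If `s` is contained in the range of a function on a finite type, then
`c < inf1 s` bounds every element of `s` from below. -/
lemma lt_of_lt_inf1 {α : Type*} [Fintype α] (f : α → ℝ) {s : Set ℝ}
    (hs : s ⊆ Set.range f) {c b : ℝ} (hb : b ∈ s) (h : c < inf1 s) : c < b := by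
  have hne : s.Nonempty := ⟨b, hb⟩
  have hfin : s.Finite := (Set.finite_range f).subset hs
  rw [inf1, if_pos hne] at h
  exact lt_of_lt_of_le h (csInf_le hfin.bddBelow hb)

/-- In a finite total relation (tournament) there is a vertex from which every
vertex is reachable. -/
lemma exists_reaches_all {I : Type*} [Fintype I] [Nonempty I] (A : I → I → Prop)
    (htot : ∀ x y : I, x ≠ y → A x y ∨ A y x) :
    ∃ z : I, ∀ w : I, Relation.ReflTransGen A z w := by
  classical
  obtain ⟨z, -, hmax⟩ := Finset.exists_max_image Finset.univ
    (fun z => (Finset.univ.filter (fun w => Relation.ReflTransGen A z w)).card)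
    Finset.univ_nonempty
  refine ⟨z, ?_⟩
  intro w
  by_contra hw
  have hwz : w ≠ z := by
    intro h; exact hw (h ▸ Relation.ReflTransGen.refl)
  have hnzw : ¬ A z w := fun h => hw (Relation.ReflTransGen.single h)
  have hAwz : A w z := by
    rcases htot z w (fun h => hwz h.symm) with h | h
    · exact absurd h hnzw
    · exact h
  have hsub : (Finset.univ.filter (fun u => Relation.ReflTransGen A z u)) ⊂
      (Finset.univ.filter (fun u => Relation.ReflTransGen A w u)) := by
    constructor
    · intro u hu
      simp only [Finset.mem_filter, Finset.mem_univ, true_and] at hu ⊢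
      exact Relation.ReflTransGen.head hAwz hu
    · intro hcon
      have hwmem : w ∈ Finset.univ.filter (fun u => Relation.ReflTransGen A w u) := by
        simp [Relation.ReflTransGen.refl]
      have := hcon hwmem
      simp only [Finset.mem_filter, Finset.mem_univ, true_and] at this
      exact hw this
  have := Finset.card_lt_card hsub
  have := hmax w (Finset.mem_univ w)
  omega

/-- Condorcet–Smith principle for comprehensive prominence: if `S` is a
majority-dominant set then `v*(p_{yx}) ≤ 1/2` for `x ∈ S`, `y ∉ S`;
consequently the comprehensive prominence method accepts `p_{xy}` for every
`x ∈ S` and `y ∉ S`. -/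
theorem stmt17 {I : Type*} [Fintype I] [DecidableEq I]
    (hcard : 2 ≤ Fintype.card I)
    (v : PVal I)
    (hbox : ∀ x y : I, x ≠ y → v.p x y ∈ Set.Icc (0:ℝ) 1)
    (hsum : ∀ x y : I, x ≠ y → v.p x y + v.p y x ≤ 1)
    (ht : ∀ x, v.t x = 0) (hnt : ∀ x, v.nt x = 0)
    (vstar : PVal I) (hstar : ∃ N : ℕ, ∀ n ≥ N, Tcp^[n] v = vstar)
    (S : Finset I) (hSne : S.Nonempty)
    (hSdom : ∀ x ∈ S, ∀ y ∉ S, 1 / 2 < v.p x y) :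
    (∀ x ∈ S, ∀ y ∉ S, vstar.p y x ≤ 1 / 2) ∧
    (∀ x ∈ S, ∀ y ∉ S, vstar.p y x < vstar.p x y) := by
  classical
  have hNe : Nonempty I := Fintype.card_pos_iff.mp (by omega)
  -- the tournament extending the "strictly above 1/2" relation
  set e := Fintype.equivFin I with he
  set A : I → I → Prop := fun x y =>
    x ≠ y ∧ (1 / 2 < v.p x y ∨ (¬ (1 / 2 < v.p y x) ∧ e x < e y)) with hA
  have hA_ext : ∀ x y : I, x ≠ y → 1 / 2 < v.p x y → A x y :=
    fun x y hxy h => ⟨hxy, Or.inl h⟩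
  have hA_asym : ∀ x y : I, A x y → ¬ A y x := by
    rintro x y ⟨hxy, h1⟩ ⟨hyx, h2⟩
    rcases h1 with h1 | ⟨h1, h1'⟩ <;> rcases h2 with h2 | ⟨h2, h2'⟩
    · have := hsum x y hxy; linarith
    · exact h2 h1
    · exact h1 h2
    · exact absurd h2' (lt_asymm h1')
  have hA_tot : ∀ x y : I, x ≠ y → A x y ∨ A y x := by
    intro x y hxy
    by_cases h1 : 1 / 2 < v.p x y
    · exact Or.inl ⟨hxy, Or.inl h1⟩
    by_cases h2 : 1 / 2 < v.p y x
    · exact Or.inr ⟨hxy.symm, Or.inl h2⟩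
    rcases lt_trichotomy (e x) (e y) with h | h | h
    · exact Or.inl ⟨hxy, Or.inr ⟨h2, h⟩⟩
    · exact absurd (e.injective (Fin.ext (by omega))) hxy
    · exact Or.inr ⟨hxy.symm, Or.inr ⟨h1, h⟩⟩
  -- a vertex reaching everything
  obtain ⟨z, hz⟩ := exists_reaches_all A hA_tot
  -- every nonempty set avoiding z is beaten from outside
  have zprop : ∀ X : Finset I, X.Nonempty → z ∉ X →
      ∃ s, s ∉ X ∧ ∃ r, r ∈ X ∧ A s r := by
    intro X hXne hzX
    obtain ⟨x0, hx0⟩ := hXne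
    have key : ∀ a b : I, Relation.ReflTransGen A a b → a ∉ X → b ∈ X →
        ∃ s, s ∉ X ∧ ∃ r, r ∈ X ∧ A s r := by
      intro a b hab
      induction hab with
      | refl => intro ha hb; exact absurd hb ha
      | @tail c d hac hcd ih =>
        intro ha hd
        by_cases hc : c ∈ X
        · exact ih ha hc
        · exact ⟨c, hc, d, hd, hcd⟩
    exact key z x0 (hz x0) hzX hx0
  -- the invariant
  set Good : PVal I → Prop := fun w =>
    (∀ x, 1 / 2 < w.t x → x = z) ∧ (∀ x, 1 / 2 < w.nt x → x ≠ z) ∧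
    (∀ x y, x ≠ y → 1 / 2 < w.p x y → A x y) with hGood
  have hGv : Good v := by
    refine ⟨?_, ?_, ?_⟩
    · intro x hx; rw [ht x] at hx; linarith
    · intro x hx; rw [hnt x] at hx; linarith
    · exact hA_ext
  have hstep : ∀ w : PVal I, Good w → Good (Tcp w) := by
    rintro w ⟨hGt, hGnt, hGp⟩
    refine ⟨?_, ?_, ?_⟩
    -- prominence literals
    · intro x hx
      simp only [Tcp] at hx
      rcases lt_max_iff.mp hx with h | h
      · exact hGt x h
      obtain ⟨a, ⟨X, hxX, rfl⟩, ha⟩ := lt_of_lt_sup0 (by norm_num) h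
      rw [lt_min_iff] at ha
      obtain ⟨h1, h2⟩ := ha
      by_contra hxz
      by_cases hzX : z ∈ X
      · have hmem : w.nt z ∈ {b : ℝ | ∃ r ∈ X, r ≠ x ∧ b = w.nt r} :=
          ⟨z, hzX, fun hc => hxz hc.symm, rfl⟩
        have : 1 / 2 < w.nt z :=
          lt_of_lt_inf1 w.nt (by rintro b ⟨r, -, -, rfl⟩; exact ⟨r, rfl⟩) hmem h1
        exact hGnt z this rfl
      · obtain ⟨s, hs, r, hr, hAsr⟩ := zprop X ⟨x, hxX⟩ hzX
        have hmem : w.p r s ∈ {b : ℝ | ∃ r ∈ X, ∃ s, s ∉ X ∧ b = w.p r s} :=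
          ⟨r, hr, s, hs, rfl⟩
        have hps : 1 / 2 < w.p r s :=
          lt_of_lt_inf1 (fun q : I × I => w.p q.1 q.2)
            (by rintro b ⟨r, -, s, -, rfl⟩; exact ⟨(r, s), rfl⟩) hmem h2
        have hrs : r ≠ s := fun hc => hs (hc ▸ hr)
        exact hA_asym r s (hGp r s hrs hps) hAsr
    -- negated prominence literals
    · intro y hy
      simp only [Tcp] at hy
      rcases lt_max_iff.mp hy with h | h
      · exact hGnt y h
      rcases lt_max_iff.mp h with h | h
      · obtain ⟨a, ⟨r, hry, rfl⟩, ha⟩ := lt_of_lt_sup0 (by norm_num) h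
        have hrz := hGt r ha
        subst hrz
        exact fun hc => hry hc.symm
      · obtain ⟨a, ⟨X, hXne, hyX, rfl⟩, ha⟩ := lt_of_lt_sup0 (by norm_num) h
        intro hyz
        subst hyz
        obtain ⟨s, hs, r, hr, hAsr⟩ := zprop X hXne hyX
        have hmem : w.p r s ∈ {b : ℝ | ∃ r ∈ X, ∃ s, s ∉ X ∧ b = w.p r s} :=
          ⟨r, hr, s, hs, rfl⟩
        have hps : 1 / 2 < w.p r s :=
          lt_of_lt_inf1 (fun q : I × I => w.p q.1 q.2)
            (by rintro b ⟨r, -, s, -, rfl⟩; exact ⟨(r, s), rfl⟩) hmem ha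
        have hrs : r ≠ s := fun hc => hs (hc ▸ hr)
        exact hA_asym r s (hGp r s hrs hps) hAsr
    -- preference literals
    · intro u w' huw hup
      simp only [Tcp] at hup
      rcases lt_max_iff.mp hup with h | h
      · exact hGp u w' huw h
      obtain ⟨a, ⟨X, hwX, huX, rfl⟩, ha⟩ := lt_of_lt_sup0 (by norm_num) h
      rw [lt_min_iff] at ha
      obtain ⟨h1, h2⟩ := ha
      by_contra hnA
      have hzX : z ∉ X := by
        rcases lt_max_iff.mp h1 with hntb | hts
        · intro hzX
          have hmem : w.nt z ∈ {b : ℝ | ∃ r ∈ X, b = w.nt r} := ⟨z, hzX, rfl⟩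
          have : 1 / 2 < w.nt z :=
            lt_of_lt_inf1 w.nt (by rintro b ⟨r, -, rfl⟩; exact ⟨r, rfl⟩) hmem hntb
          exact hGnt z this rfl
        · obtain ⟨b, ⟨s, hs, rfl⟩, hb⟩ := lt_of_lt_sup0 (by norm_num) hts
          have := hGt s hb
          exact this ▸ hs
      obtain ⟨s, hs, r, hr, hAsr⟩ := zprop X ⟨w', hwX⟩ hzX
      by_cases hpair : r = w' ∧ s = u
      · obtain ⟨rfl, rfl⟩ := hpair
        exact hnA hAsr
      · have hmem : w.p r s ∈
            {b : ℝ | ∃ r ∈ X, ∃ s, s ∉ X ∧ ¬(r = w' ∧ s = u) ∧ b = w.p r s} :=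
          ⟨r, hr, s, hs, hpair, rfl⟩
        have hps : 1 / 2 < w.p r s :=
          lt_of_lt_inf1 (fun q : I × I => w.p q.1 q.2)
            (by rintro b ⟨r, -, s, -, -, rfl⟩; exact ⟨(r, s), rfl⟩) hmem h2
        have hrs : r ≠ s := fun hc => hs (hc ▸ hr)
        exact hA_asym r s (hGp r s hrs hps) hAsr
  have hGn : ∀ n : ℕ, Good (Tcp^[n] v) := by
    intro n
    induction n with
    | zero => exact hGv
    | succ n ih => rw [Function.iterate_succ_apply']; exact hstep _ ih
  have hmono : ∀ n : ℕ, ∀ x y : I, v.p x y ≤ (Tcp^[n] v).p x y := by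
    intro n
    induction n with
    | zero => intro x y; exact le_rfl
    | succ n ih =>
      intro x y
      rw [Function.iterate_succ_apply']
      exact le_trans (ih x y) (by simp only [Tcp]; exact le_max_left _ _)
  obtain ⟨N, hN⟩ := hstar
  have hvs : Tcp^[N] v = vstar := hN N le_rfl
  have hGstar : Good vstar := hvs ▸ hGn N
  have part1 : ∀ x ∈ S, ∀ y ∉ S, vstar.p y x ≤ 1 / 2 := by
    intro x hx y hy
    have hxy : x ≠ y := fun hc => hy (hc ▸ hx)
    by_contra hcon
    push_neg at hcon
    have hAyx : A y x := hGstar.2.2 y x hxy.symm hcon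
    exact hA_asym x y (hA_ext x y hxy (hSdom x hx y hy)) hAyx
  refine ⟨part1, ?_⟩
  intro x hx y hy
  have h1 : vstar.p y x ≤ 1 / 2 := part1 x hx y hy
  have h2 : 1 / 2 < v.p x y := hSdom x hx y hy
  have h3 : v.p x y ≤ vstar.p x y := hvs ▸ hmono N x y
  linarith
end
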